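/- arXiv:2305.01851 — 8 statements merged into one kernel-verified Lean document; each statement's English description precedes it below -/
import Mathlib

section
/- For all natural numbers i, q, t with q ≥ 3 and 1 ≤ t ≤ i, and every real number s, the identity ∑_{k=i−t}^{i−1} [ (s + (i−k)·q + (k − 2i)) · ∏_{m=1}^{q−3} (s + m − k) ] = t · ∏_{m=1}^{q−2} (s + m − i + t) holds, where the sum ranges over the integers k with i−t ≤ k ≤ i−1, all integer quantities are cast into ℝ, and an empty product equals 1 (e.g. the inner product is empty when q = 3). -/
private lemma prodA (n : ℕ) (u : ℝ) :
    ∏ m ∈ Finset.Icc 1 (n + 1), (u + (m : ℝ)) =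
      (u + ((n : ℝ) + 1)) * ∏ m ∈ Finset.Icc 1 n, (u + (m : ℝ)) := by
  rw [Finset.prod_Icc_succ_top (by omega : 1 ≤ n + 1)]
  push_cast
  ring

private lemma prodB (n : ℕ) (u : ℝ) :
    ∏ m ∈ Finset.Icc 1 (n + 1), (u - 1 + (m : ℝ)) =
      u * ∏ m ∈ Finset.Icc 1 n, (u + (m : ℝ)) := by
  induction n with
  | zero => simp
  | succ n ih =>
    rw [Finset.prod_Icc_succ_top (by omega : 1 ≤ n + 1 + 1), ih, prodA]
    push_cast
    ring

/-- For all natural numbers `i, q, t` with `q ≥ 3` and `1 ≤ t ≤ i`, and every real `s`,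
∑_{k=i−t}^{i−1} (s + (i−k)q + (k − 2i)) ∏_{m=1}^{q−3} (s + m − k)
  = t ∏_{m=1}^{q−2} (s + m − i + t). -/
theorem stmt0 (i q t : ℕ) (hq : 3 ≤ q) (ht1 : 1 ≤ t) (hti : t ≤ i) (s : ℝ) :
    ∑ k ∈ Finset.Ico (i - t) i,
      ((s + ((i : ℝ) - (k : ℝ)) * (q : ℝ) + ((k : ℝ) - 2 * (i : ℝ))) *
        ∏ m ∈ Finset.Icc 1 (q - 3), (s + (m : ℝ) - (k : ℝ)))
    = (t : ℝ) * ∏ m ∈ Finset.Icc 1 (q - 2), (s + (m : ℝ) - (i : ℝ) + (t : ℝ)) := by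
  obtain ⟨n, rfl⟩ : ∃ n, q = n + 3 := ⟨q - 3, by omega⟩
  have h3 : n + 3 - 3 = n := by omega
  have h2 : n + 3 - 2 = n + 1 := by omega
  rw [h3, h2]
  clear hq
  revert hti
  induction t, ht1 using Nat.le_induction with
  | base =>
    intro hti
    rw [show Finset.Ico (i - 1) i = {i - 1} by ext x; simp [Finset.mem_Ico]; omega,
      Finset.sum_singleton]
    have hc : ((i - 1 : ℕ) : ℝ) = (i : ℝ) - 1 := by
      rw [Nat.cast_sub hti]; norm_num
    rw [hc]
    have hp : ∏ m ∈ Finset.Icc 1 n, (s + (m : ℝ) - ((i : ℝ) - 1)) =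
        ∏ m ∈ Finset.Icc 1 n, ((s - (i : ℝ) + 1) + (m : ℝ)) :=
      Finset.prod_congr rfl fun m _ => by ring
    have hq : ∏ m ∈ Finset.Icc 1 (n + 1), (s + (m : ℝ) - (i : ℝ) + ((1 : ℕ) : ℝ)) =
        ∏ m ∈ Finset.Icc 1 (n + 1), ((s - (i : ℝ) + 1) + (m : ℝ)) :=
      Finset.prod_congr rfl fun m _ => by push_cast; ring
    rw [hp, hq, prodA]
    push_cast
    ring
  | succ t ht ih =>
    intro hti
    rw [show Finset.Ico (i - (t + 1)) i = insert (i - (t + 1)) (Finset.Ico (i - t) i) by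
        ext x; simp [Finset.mem_Ico, Finset.mem_insert]; omega,
      Finset.sum_insert (by simp [Finset.mem_Ico]; omega),
      ih (by omega)]
    have hc : ((i - (t + 1) : ℕ) : ℝ) = (i : ℝ) - (t : ℝ) - 1 := by
      rw [Nat.cast_sub hti]; push_cast; ring
    rw [hc]
    set u : ℝ := s - (i : ℝ) + (t : ℝ) + 1 with hu
    have hp1 : ∏ m ∈ Finset.Icc 1 n, (s + (m : ℝ) - ((i : ℝ) - (t : ℝ) - 1)) =
        ∏ m ∈ Finset.Icc 1 n, (u + (m : ℝ)) :=
      Finset.prod_congr rfl fun m _ => by rw [hu]; ring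
    have hp2 : ∏ m ∈ Finset.Icc 1 (n + 1), (s + (m : ℝ) - (i : ℝ) + (t : ℝ)) =
        ∏ m ∈ Finset.Icc 1 (n + 1), (u - 1 + (m : ℝ)) :=
      Finset.prod_congr rfl fun m _ => by rw [hu]; ring
    have hp3 : ∏ m ∈ Finset.Icc 1 (n + 1), (s + (m : ℝ) - (i : ℝ) + ((t : ℕ) + 1 : ℕ)) =
        ∏ m ∈ Finset.Icc 1 (n + 1), (u + (m : ℝ)) :=
      Finset.prod_congr rfl fun m _ => by rw [hu]; push_cast; ring
    rw [hp1, hp2, hp3, prodB, prodA]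
    push_cast
    ring
end

section
/- For every natural number q ≥ 3 and every function c : Fin q → ℕ, setting s = ∑_{i} c(i), the identity ∑_{j=0}^{q−1} ∑_{k=0}^{c(j)−1} [ ((q−2)·c(j) − (q−1)·k + s) · ∏_{m=1}^{q−3} (s − k + m) ] = ∏_{m=2}^{q} (s + q − m) holds as an identity of integers, where the inner sum over k is empty when c(j) = 0 and empty products equal 1. -/
private def Qp (n : ℕ) (x : ℤ) : ℤ := ∏ m ∈ Finset.range n, (x + m)

private lemma Qp_succ (n : ℕ) (x : ℤ) : Qp (n + 1) x = Qp n x * (x + n) :=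
  Finset.prod_range_succ _ _

private lemma Qp_succ' (n : ℕ) (x : ℤ) : Qp (n + 1) x = x * Qp n (x + 1) := by
  rw [Qp, Finset.prod_range_succ']
  simp only [Nat.cast_zero, add_zero, Nat.cast_add, Nat.cast_one]
  rw [mul_comm, Qp]
  congr 1
  exact Finset.prod_congr rfl fun i _ => by ring

private lemma icc_prod (n : ℕ) (x : ℤ) :
    ∏ m ∈ Finset.Icc 1 n, (x + (m : ℤ)) = Qp n (x + 1) := by
  rw [show Finset.Icc 1 n = Finset.Ico 1 (n+1) by rfl, Finset.prod_Ico_eq_prod_range, Qp]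
  simp only [Nat.add_sub_cancel]
  exact Finset.prod_congr rfl fun i _ => by push_cast; ring

/-- For `q ≥ 3` and `c : Fin q → ℕ` with `s = ∑ c i`,
∑_{j} ∑_{k=0}^{c j − 1} ((q−2)·c j − (q−1)·k + s) ∏_{m=1}^{q−3} (s − k + m)
  = ∏_{m=2}^{q} (s + q − m), as integers. -/
theorem stmt1 (q : ℕ) (hq : 3 ≤ q) (c : Fin q → ℕ) (s : ℕ) (hs : s = ∑ i, c i) :
    ∑ j, ∑ k ∈ Finset.range (c j),
      ((((q : ℤ) - 2) * (c j : ℤ) - ((q : ℤ) - 1) * (k : ℤ) + (s : ℤ)) *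
        ∏ m ∈ Finset.Icc 1 (q - 3), ((s : ℤ) - (k : ℤ) + (m : ℤ)))
    = ∏ m ∈ Finset.Icc 2 q, ((s : ℤ) + (q : ℤ) - (m : ℤ)) := by
  obtain ⟨n, rfl⟩ : ∃ n, q = n + 3 := ⟨q - 3, by omega⟩
  have hn3 : n + 3 - 3 = n := by omega
  rw [hn3]
  -- inner telescoping
  have hinner : ∀ j : Fin (n + 3),
      ∑ k ∈ Finset.range (c j),
        ((((n + 3 : ℕ) : ℤ) - 2) * (c j : ℤ) - (((n + 3 : ℕ) : ℤ) - 1) * (k : ℤ) + (s : ℤ)) *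
          ∏ m ∈ Finset.Icc 1 n, ((s : ℤ) - (k : ℤ) + (m : ℤ))
      = (c j : ℤ) * Qp (n + 1) ((s : ℤ) + 1) := by
    intro j
    have key : ∀ k : ℕ,
        ((((n + 3 : ℕ) : ℤ) - 2) * (c j : ℤ) - (((n + 3 : ℕ) : ℤ) - 1) * (k : ℤ) + (s : ℤ)) *
          ∏ m ∈ Finset.Icc 1 n, ((s : ℤ) - (k : ℤ) + (m : ℤ))
        = ((c j : ℤ) - k) * Qp (n + 1) ((s : ℤ) - k + 1)
          - ((c j : ℤ) - (k + 1)) * Qp (n + 1) ((s : ℤ) - (k + 1 : ℕ) + 1) := by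
      intro k
      rw [icc_prod n ((s : ℤ) - k), Qp_succ n ((s : ℤ) - k + 1)]
      have : ((s : ℤ) - (k + 1 : ℕ) + 1) = (s : ℤ) - k := by push_cast; ring
      rw [this, Qp_succ' n ((s : ℤ) - k)]
      push_cast
      ring
    calc ∑ k ∈ Finset.range (c j),
          ((((n + 3 : ℕ) : ℤ) - 2) * (c j : ℤ) - (((n + 3 : ℕ) : ℤ) - 1) * (k : ℤ) + (s : ℤ)) *
            ∏ m ∈ Finset.Icc 1 n, ((s : ℤ) - (k : ℤ) + (m : ℤ))
        = ∑ k ∈ Finset.range (c j),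
            (((c j : ℤ) - k) * Qp (n + 1) ((s : ℤ) - k + 1)
              - ((c j : ℤ) - ((k + 1 : ℕ) : ℤ)) * Qp (n + 1) ((s : ℤ) - ((k + 1 : ℕ) : ℤ) + 1)) := by
          refine Finset.sum_congr rfl fun k _ => ?_
          have := key k; push_cast at this ⊢; linarith [this]
      _ = ((c j : ℤ) - (0 : ℕ)) * Qp (n + 1) ((s : ℤ) - (0 : ℕ) + 1)
          - ((c j : ℤ) - (c j : ℕ)) * Qp (n + 1) ((s : ℤ) - (c j : ℕ) + 1) :=
          Finset.sum_range_sub' (fun k => ((c j : ℤ) - (k : ℕ)) * Qp (n + 1) ((s : ℤ) - (k : ℕ) + 1)) (c j)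
      _ = (c j : ℤ) * Qp (n + 1) ((s : ℤ) + 1) := by push_cast; ring
  rw [Finset.sum_congr rfl fun j _ => hinner j, ← Finset.sum_mul, ← Nat.cast_sum, ← hs,
    ← Qp_succ' (n + 1) (s : ℤ)]
  -- now RHS
  rw [show Finset.Icc 2 (n+3) = Finset.Ico 2 (n+4) by rfl, Finset.prod_Ico_eq_prod_range]
  have h2 : n + 4 - 2 = n + 2 := by omega
  rw [h2, Qp, ← Finset.prod_range_reflect]
  refine Finset.prod_congr rfl fun i hi => ?_
  simp only [Finset.mem_range] at hi
  have : (↑(n + 2 - 1 - i) : ℤ) = (n : ℤ) + 1 - i := by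
    have : n + 2 - 1 - i = n + 1 - i := by omega
    rw [this, Nat.cast_sub (by omega)]
    push_cast; ring
  rw [this]
  push_cast
  ring
end

section
/- Let p be an odd prime, let k ≥ 1 and n ≥ 1 be natural numbers, and let a : Fin n → ℕ satisfy a(i) ≥ 3 for all i and ∑_{i} a(i) = k·p. Let {π_1, …, π_m} be a partition of the index set Fin n into m nonempty parts; for each part π_j set p_j = |π_j| and g_j = ∑_{i ∈ π_j} (a(i) − 1). Define the natural number V = multinomial(kp; g_1 + p_1, …, g_m + p_m) · 2^{kp + n − 3m} · ∏_{i} (a(i) − 1) · ∏_{j=1}^{m} ∏_{l=0}^{p_j − 2} (g_j + l). If p does not divide V, then every part π_j satisfies both (i) |π_j| ≤ p and (ii) p divides ∑_{i ∈ π_j} a(i). -/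
/-- If `p` is prime, `p ∣ N` and `p ∤ C(N,r)`, then `p ∣ r`. -/
lemma aux_choose (p N r : ℕ) (hp : p.Prime) (hN : p ∣ N)
    (h : ¬ p ∣ Nat.choose N r) : p ∣ r := by
  by_contra hr
  have hr0 : r ≠ 0 := by rintro rfl; exact hr (dvd_zero p)
  have hN0 : N ≠ 0 := by
    rintro rfl
    rw [Nat.choose_eq_zero_of_lt (Nat.pos_of_ne_zero hr0)] at h
    exact h (dvd_zero p)
  obtain ⟨N', rfl⟩ := Nat.exists_eq_succ_of_ne_zero hN0
  obtain ⟨r', rfl⟩ := Nat.exists_eq_succ_of_ne_zero hr0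
  have key := Nat.add_one_mul_choose_eq N' r'
  have hdvd : p ∣ Nat.choose (N' + 1) (r' + 1) * (r' + 1) := by
    rw [← key]; exact Dvd.dvd.mul_right hN _
  rcases (Nat.Prime.dvd_mul hp).mp hdvd with h1 | h2
  · exact h h1
  · exact hr h2

/-- Let `p` be an odd prime, `k ≥ 1`, `n ≥ 1`, and `a : Fin n → ℕ` with each `a i ≥ 3` and
`∑ a i = k·p`.  Given a partition of `Fin n` into `m` nonempty parts `π j`, with
`p_j = |π j|` and `g_j = ∑_{i ∈ π j} (a i − 1)`, if `p` does not divide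
`multinomial(kp; g_1+p_1, …, g_m+p_m) · 2^{kp+n−3m} · ∏_i (a i − 1) · ∏_j ∏_{l=0}^{p_j−2} (g_j + l)`,
then every part has at most `p` elements and `p` divides the sum of `a` over each part. -/
theorem stmt3 (p k n m : ℕ) (hp : p.Prime) (hodd : Odd p) (hk : 1 ≤ k) (hn : 1 ≤ n)
    (a : Fin n → ℕ) (ha : ∀ i, 3 ≤ a i) (hsum : ∑ i, a i = k * p)
    (π : Fin m → Finset (Fin n))
    (hne : ∀ j, (π j).Nonempty)
    (hdisj : ∀ j j', j ≠ j' → Disjoint (π j) (π j'))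
    (hcover : ∀ i, ∃ j, i ∈ π j)
    (hV : ¬ p ∣
      (Nat.multinomial Finset.univ
          (fun j : Fin m => (∑ i ∈ π j, (a i - 1)) + (π j).card) *
        2 ^ (k * p + n - 3 * m) *
        (∏ i, (a i - 1)) *
        ∏ j : Fin m, ∏ l ∈ Finset.range ((π j).card - 1),
          ((∑ i ∈ π j, (a i - 1)) + l))) :
    ∀ j : Fin m, (π j).card ≤ p ∧ p ∣ ∑ i ∈ π j, a i := by
  have hp0 : 0 < p := hp.pos
  set g : Fin m → ℕ := fun j => (∑ i ∈ π j, (a i - 1)) + (π j).card with hgdef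
  -- g j = ∑ i ∈ π j, a i
  have hgj : ∀ j, g j = ∑ i ∈ π j, a i := by
    intro j
    simp only [hgdef]
    rw [Finset.card_eq_sum_ones, ← Finset.sum_add_distrib]
    exact Finset.sum_congr rfl fun i _ => Nat.sub_add_cancel (le_trans (by norm_num) (ha i))
  -- the parts cover everything
  have hbi : Finset.univ.biUnion π = (Finset.univ : Finset (Fin n)) := by
    apply Finset.eq_univ_of_forall
    intro i
    obtain ⟨j, hj⟩ := hcover i
    exact Finset.mem_biUnion.mpr ⟨j, Finset.mem_univ j, hj⟩
  have htot : ∑ j, g j = k * p := by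
    have hpd : ((Finset.univ : Finset (Fin m)) : Set (Fin m)).PairwiseDisjoint π := by
      intro x _ y _ hxy; exact hdisj x y hxy
    calc ∑ j, g j = ∑ j, ∑ i ∈ π j, a i := by simp [hgj]
      _ = ∑ i ∈ Finset.univ.biUnion π, a i := (Finset.sum_biUnion hpd).symm
      _ = k * p := by rw [hbi, hsum]
  -- p does not divide the multinomial coefficient
  have hM : ¬ p ∣ Nat.multinomial Finset.univ g := fun h =>
    hV (dvd_mul_of_dvd_left (dvd_mul_of_dvd_left (dvd_mul_of_dvd_left h _) _) _)
  -- p does not divide the double product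
  have hP : ¬ p ∣ ∏ j : Fin m, ∏ l ∈ Finset.range ((π j).card - 1),
      ((∑ i ∈ π j, (a i - 1)) + l) := fun h => hV (dvd_mul_of_dvd_right h _)
  intro j
  constructor
  · -- card bound
    by_contra hcard
    push_neg at hcard
    set s := ∑ i ∈ π j, (a i - 1) with hs
    set l0 := (p - s % p) % p with hl0
    have hl0p : l0 < p := Nat.mod_lt _ hp0
    have hdvdl0 : p ∣ s + l0 := by
      rcases Nat.eq_zero_or_pos (s % p) with h0 | h0
      · have : l0 = 0 := by
          rw [hl0, h0, Nat.sub_zero, Nat.mod_self]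
        rw [this, Nat.add_zero]
        exact Nat.dvd_of_mod_eq_zero h0
      · have hlt : p - s % p < p := by
          have := Nat.mod_lt s hp0
          omega
        have hl0eq : l0 = p - s % p := by rw [hl0, Nat.mod_eq_of_lt hlt]
        have h1 : p ∣ s - s % p := Nat.dvd_sub_mod s
        have h2 : p ∣ (s - s % p) + p := Dvd.dvd.add h1 dvd_rfl
        have hle : s % p ≤ s := Nat.mod_le s p
        have hlep : s % p ≤ p := le_of_lt (Nat.mod_lt s hp0)
        have : s + l0 = (s - s % p) + p := by rw [hl0eq]; omega
        rw [this]; exact h2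
    have hmem : l0 ∈ Finset.range ((π j).card - 1) := by
      apply Finset.mem_range.mpr
      omega
    apply hP
    calc p ∣ s + l0 := hdvdl0
      _ ∣ ∏ l ∈ Finset.range ((π j).card - 1), (s + l) :=
          Finset.dvd_prod_of_mem _ hmem
      _ ∣ ∏ j' : Fin m, ∏ l ∈ Finset.range ((π j').card - 1),
            ((∑ i ∈ π j', (a i - 1)) + l) :=
          Finset.dvd_prod_of_mem _ (Finset.mem_univ j)
  · -- divisibility of the part sum
    rw [← hgj]
    -- express multinomial through a binomial coefficient
    have hins : (Finset.univ : Finset (Fin m)) = insert j (Finset.univ.erase j) := by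
      rw [Finset.insert_erase (Finset.mem_univ j)]
    have hnot : j ∉ Finset.univ.erase j := Finset.notMem_erase j _
    have hmul : Nat.multinomial Finset.univ g =
        (g j + ∑ i ∈ Finset.univ.erase j, g i).choose (g j) *
          Nat.multinomial (Finset.univ.erase j) g := by
      conv_lhs => rw [hins]
      exact Nat.multinomial_insert hnot g
    have hsum' : g j + ∑ i ∈ Finset.univ.erase j, g i = k * p := by
      rw [Finset.add_sum_erase _ g (Finset.mem_univ j), htot]
    have hchoose : ¬ p ∣ (k * p).choose (g j) := by
      intro h
      apply hM
      rw [hmul, hsum']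
      exact Dvd.dvd.mul_right h _
    exact aux_choose p (k * p) (g j) hp ⟨k, by ring⟩ hchoose
end

section
/- Let n ≥ 1 be a natural number and let f : Fin (2n) → ℕ satisfy f(i) ≥ 1 for all i. Set a = 1 + ∑_{i} f(i) and define g : Fin (2n) → ℕ by g(i) = f(i) + a. Then every equal-sum subset S ⊆ Fin (2n) for g satisfies |S| = n. -/
/-- Let `n ≥ 1` and `f : Fin (2n) → ℕ` with `f i ≥ 1` for all `i`.  Set `a = 1 + ∑ f i` and
`g i = f i + a`.  Then every subset `S` with `∑_{i ∈ S} g i = ∑_{i ∉ S} g i` has `|S| = n`. -/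
theorem stmt5 (n : ℕ) (hn : 1 ≤ n) (f : Fin (2 * n) → ℕ) (hf : ∀ i, 1 ≤ f i)
    (a : ℕ) (ha : a = 1 + ∑ i, f i)
    (g : Fin (2 * n) → ℕ) (hg : ∀ i, g i = f i + a)
    (S : Finset (Fin (2 * n)))
    (hS : ∑ i ∈ S, g i = ∑ i ∈ Sᶜ, g i) :
    S.card = n := by
  simp only [hg, Finset.sum_add_distrib, Finset.sum_const, smul_eq_mul] at hS
  have hb1 : ∑ i ∈ S, f i ≤ ∑ i, f i :=
    Finset.sum_le_sum_of_subset (Finset.subset_univ S)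
  have hb2 : ∑ i ∈ Sᶜ, f i ≤ ∑ i, f i :=
    Finset.sum_le_sum_of_subset (Finset.subset_univ Sᶜ)
  have hc : S.card + Sᶜ.card = 2 * n := by
    rw [Finset.card_add_card_compl]; simp
  rcases lt_trichotomy S.card Sᶜ.card with h | h | h
  · exfalso
    have : S.card * a + a ≤ Sᶜ.card * a := by
      have := Nat.succ_le_of_lt h
      calc S.card * a + a = (S.card + 1) * a := by ring
        _ ≤ Sᶜ.card * a := Nat.mul_le_mul_right a this
    omega
  · omega
  · exfalso
    have : Sᶜ.card * a + a ≤ S.card * a := by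
      have := Nat.succ_le_of_lt h
      calc Sᶜ.card * a + a = (Sᶜ.card + 1) * a := by ring
        _ ≤ S.card * a := Nat.mul_le_mul_right a this
    omega
end

section
/- Let n ≥ 1 be a natural number and let f : Fin (2n) → ℕ satisfy f(i) ≥ 1 for all i. Set a = 1 + ∑_{i} f(i), define g : Fin (2n) → ℕ by g(i) = f(i) + a, set b = ∑_{i} g(i), and let c be a natural number with c > b. Define ĝ : Fin (2n+2) → ℕ by ĝ(i) = g(i) for the first 2n indices and ĝ(i) = c for the remaining two indices. Then: (i) every equal-sum subset S ⊆ Fin (2n+2) for ĝ has |S| = n + 1 and contains exactly one of the two indices of value c; and (ii) the number of equal-sum subsets for ĝ equals twice the number of equal-sum subsets for g. -/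
set_option maxHeartbeats 1000000

/-- Let `n ≥ 1`, `f : Fin (2n) → ℕ` with `f i ≥ 1`, `a = 1 + ∑ f i`, `g i = f i + a`,
`b = ∑ g i`, and `c > b`.  Define `gh : Fin (2n+2) → ℕ` agreeing with `g` on the first `2n`
indices and equal to `c` on the last two.  Then (i) every equal-sum subset `S` for `gh` has
`|S| = n+1` and contains exactly one of the two indices of value `c`, and (ii) the number of
equal-sum subsets for `gh` is twice the number of equal-sum subsets for `g`. -/
theorem stmt6 (n : ℕ) (hn : 1 ≤ n) (f : Fin (2 * n) → ℕ) (hf : ∀ i, 1 ≤ f i)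
    (a : ℕ) (ha : a = 1 + ∑ i, f i)
    (g : Fin (2 * n) → ℕ) (hg : ∀ i, g i = f i + a)
    (b : ℕ) (hb : b = ∑ i, g i)
    (c : ℕ) (hc : b < c)
    (gh : Fin (2 * n + 2) → ℕ)
    (hgh : ∀ i : Fin (2 * n + 2),
      gh i = if h : (i : ℕ) < 2 * n then g ⟨i, h⟩ else c) :
    (∀ S : Finset (Fin (2 * n + 2)), ∑ i ∈ S, gh i = ∑ i ∈ Sᶜ, gh i →
      S.card = n + 1 ∧
        ((⟨2 * n, by omega⟩ : Fin (2 * n + 2)) ∈ S ↔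
          (⟨2 * n + 1, by omega⟩ : Fin (2 * n + 2)) ∉ S)) ∧
    (Finset.univ.filter
        (fun S : Finset (Fin (2 * n + 2)) => ∑ i ∈ S, gh i = ∑ i ∈ Sᶜ, gh i)).card
      = 2 * (Finset.univ.filter
          (fun S : Finset (Fin (2 * n)) => ∑ i ∈ S, g i = ∑ i ∈ Sᶜ, g i)).card := by
  classical
  obtain ⟨e0, he0val⟩ : ∃ e : Fin (2 * n + 2), (e : ℕ) = 2 * n := ⟨⟨2 * n, by omega⟩, rfl⟩
  obtain ⟨e1, he1val⟩ : ∃ e : Fin (2 * n + 2), (e : ℕ) = 2 * n + 1 := ⟨⟨2 * n + 1, by omega⟩, rfl⟩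
  obtain ⟨ι, hιval⟩ : ∃ ι : Fin (2 * n) ↪ Fin (2 * n + 2), ∀ i, ((ι i : Fin (2 * n + 2)) : ℕ) = i :=
    ⟨⟨fun i => ⟨i.1, by omega⟩, fun i j h => by simpa [Fin.ext_iff] using h⟩, fun i => rfl⟩
  have hghι : ∀ i : Fin (2 * n), gh (ι i) = g i := by
    intro i
    have hlt : ((ι i : Fin (2 * n + 2)) : ℕ) < 2 * n := by rw [hιval]; exact i.isLt
    rw [hgh, dif_pos hlt]
    congr 1
    exact Fin.ext (hιval i)
  have hghe0 : gh e0 = c := by rw [hgh, dif_neg (by omega)]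
  have hghe1 : gh e1 = c := by rw [hgh, dif_neg (by omega)]
  have hne : e0 ≠ e1 := by
    intro h; have := congrArg Fin.val h; omega
  have hιne : ∀ i : Fin (2 * n), ι i ≠ e0 ∧ ι i ≠ e1 := by
    intro i
    have hi := i.isLt
    have hv := hιval i
    constructor <;> intro h <;> (have := congrArg Fin.val h; omega)
  obtain ⟨T, hTmem⟩ : ∃ T : Finset (Fin (2 * n + 2)) → Finset (Fin (2 * n)),
      ∀ S i, i ∈ T S ↔ ι i ∈ S :=
    ⟨fun S => Finset.univ.filter (fun i : Fin (2 * n) => ι i ∈ S), by simp⟩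
  have hTcompl : ∀ S, T Sᶜ = (T S)ᶜ := by
    intro S; ext i; simp [hTmem]
  -- decomposition
  have hdecomp : ∀ S : Finset (Fin (2 * n + 2)),
      S = (T S).map ι ∪ (({e0, e1} : Finset (Fin (2 * n + 2))).filter (· ∈ S)) := by
    intro S; ext j
    simp only [Finset.mem_union, Finset.mem_map, Finset.mem_filter, Finset.mem_insert,
      Finset.mem_singleton, hTmem]
    constructor
    · intro hj
      by_cases hlt : (j : ℕ) < 2 * n
      · have heq : ι ⟨j, hlt⟩ = j := Fin.ext (hιval _)
        exact Or.inl ⟨⟨j, hlt⟩, by rwa [heq], heq⟩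
      · refine Or.inr ⟨?_, hj⟩
        have hj2 := j.isLt
        have : (j : ℕ) = 2 * n ∨ (j : ℕ) = 2 * n + 1 := by omega
        rcases this with h | h
        · exact Or.inl (Fin.ext (by omega))
        · exact Or.inr (Fin.ext (by omega))
    · rintro (⟨i, hi, rfl⟩ | ⟨_, hj⟩)
      · exact hi
      · exact hj
  have hdisj : ∀ S : Finset (Fin (2 * n + 2)),
      Disjoint ((T S).map ι) (({e0, e1} : Finset (Fin (2 * n + 2))).filter (· ∈ S)) := by
    intro S
    rw [Finset.disjoint_left]
    rintro j hj hj2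
    simp only [Finset.mem_map] at hj
    obtain ⟨i, _, rfl⟩ := hj
    simp only [Finset.mem_filter, Finset.mem_insert, Finset.mem_singleton] at hj2
    rcases hj2.1 with h | h
    · exact (hιne i).1 h
    · exact (hιne i).2 h
  have hsplit : ∀ S : Finset (Fin (2 * n + 2)),
      ∑ i ∈ S, gh i = ∑ i ∈ T S, g i
        + ((if e0 ∈ S then c else 0) + (if e1 ∈ S then c else 0)) := by
    intro S
    conv_lhs => rw [hdecomp S]
    rw [Finset.sum_union (hdisj S), Finset.sum_map, Finset.sum_filter,
      Finset.sum_pair hne, hghe0, hghe1]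
    congr 1
    exact Finset.sum_congr rfl (fun i _ => hghι i)
  -- sum bounds
  have hgb : ∀ U : Finset (Fin (2 * n)), ∑ i ∈ U, g i ≤ b := by
    intro U; rw [hb]
    exact Finset.sum_le_sum_of_subset (Finset.subset_univ U)
  -- balance lemma
  have harith : ∀ s1 s2 t1 t2 : ℕ, s1 + s2 + 1 = a → t1 + t2 = 2 * n →
      s1 + t1 * a = s2 + t2 * a → t1 = n := by
    intro s1 s2 t1 t2 h1 h2 h3
    rcases lt_trichotomy t1 t2 with h | h | h
    · exfalso
      have h4 : (t1 + 1) * a ≤ t2 * a := Nat.mul_le_mul_right a h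
      have h5 : (t1 + 1) * a = t1 * a + a := by ring
      linarith
    · omega
    · exfalso
      have h4 : (t2 + 1) * a ≤ t1 * a := Nat.mul_le_mul_right a h
      have h5 : (t2 + 1) * a = t2 * a + a := by ring
      linarith
  have hbal : ∀ U : Finset (Fin (2 * n)), ∑ i ∈ U, g i = ∑ i ∈ Uᶜ, g i → U.card = n := by
    intro U hU
    have hsum : ∀ V : Finset (Fin (2 * n)), ∑ i ∈ V, g i = ∑ i ∈ V, f i + V.card * a := by
      intro V
      simp only [hg]
      rw [Finset.sum_add_distrib, Finset.sum_const, smul_eq_mul]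
    have hfs : ∑ i ∈ U, f i + ∑ i ∈ Uᶜ, f i = ∑ i, f i := Finset.sum_add_sum_compl U f
    have hcards : U.card + Uᶜ.card = 2 * n := by
      have := Finset.card_add_card_compl U
      simpa using this
    rw [hsum U, hsum Uᶜ] at hU
    exact harith _ _ _ _ (by omega) hcards hU
  -- key lemma
  have hkey : ∀ S : Finset (Fin (2 * n + 2)), ∑ i ∈ S, gh i = ∑ i ∈ Sᶜ, gh i →
      (e0 ∈ S ↔ e1 ∉ S) ∧ ∑ i ∈ T S, g i = ∑ i ∈ (T S)ᶜ, g i := by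
    intro S hS
    rw [hsplit S, hsplit Sᶜ, hTcompl] at hS
    simp only [Finset.mem_compl] at hS
    have hb1 := hgb (T S)
    have hb2 := hgb (T S)ᶜ
    by_cases h0 : e0 ∈ S <;> by_cases h1 : e1 ∈ S <;> simp [h0, h1] at hS ⊢ <;>
      linarith [Nat.zero_le (∑ i ∈ T S, g i), Nat.zero_le (∑ i ∈ (T S)ᶜ, g i)]
  -- filter {e0,e1} characterization
  have hfilt : ∀ S : Finset (Fin (2 * n + 2)), (e0 ∈ S ↔ e1 ∉ S) →
      ({e0, e1} : Finset (Fin (2 * n + 2))).filter (· ∈ S)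
        = {if e0 ∈ S then e0 else e1} := by
    intro S hiff
    by_cases h0 : e0 ∈ S
    · have h1 : e1 ∉ S := hiff.mp h0
      rw [show ({e0, e1} : Finset (Fin (2 * n + 2))) = insert e0 {e1} from rfl,
        Finset.filter_insert, Finset.filter_singleton]
      simp [h0, h1]
    · have h1 : e1 ∈ S := by by_contra h1; exact h0 (hiff.mpr h1)
      rw [show ({e0, e1} : Finset (Fin (2 * n + 2))) = insert e0 {e1} from rfl,
        Finset.filter_insert, Finset.filter_singleton]
      simp [h0, h1]
  -- membership facts for the backward map
  have hnotmap : ∀ Tt : Finset (Fin (2 * n)), e0 ∉ Tt.map ι ∧ e1 ∉ Tt.map ι := by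
    intro Tt
    constructor <;> intro h <;> simp only [Finset.mem_map] at h <;>
      obtain ⟨i, _, hi⟩ := h
    · exact (hιne i).1 hi
    · exact (hιne i).2 hi
  have hTbwd : ∀ (Tt : Finset (Fin (2 * n))) (bb : Bool),
      T (Tt.map ι ∪ {if bb then e0 else e1}) = Tt := by
    intro Tt bb; ext i
    rw [hTmem]
    simp only [Finset.mem_union, Finset.mem_singleton]
    constructor
    · rintro (h | h)
      · exact (Finset.mem_map' ι).mp h
      · exfalso; cases bb <;> simp only [if_true, if_false, Bool.false_eq_true] at h
        · exact (hιne i).2 h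
        · exact (hιne i).1 h
    · intro h; exact Or.inl ((Finset.mem_map' ι).mpr h)
  have he0bwd : ∀ (Tt : Finset (Fin (2 * n))) (bb : Bool),
      e0 ∈ Tt.map ι ∪ {if bb then e0 else e1} ↔ bb = true := by
    intro Tt bb
    simp only [Finset.mem_union, Finset.mem_singleton]
    cases bb <;> simp [(hnotmap Tt).1, hne]
  have he1bwd : ∀ (Tt : Finset (Fin (2 * n))) (bb : Bool),
      e1 ∈ Tt.map ι ∪ {if bb then e0 else e1} ↔ bb = false := by
    intro Tt bb
    simp only [Finset.mem_union, Finset.mem_singleton]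
    cases bb <;> simp [(hnotmap Tt).2, hne.symm]
  have hbwdsum : ∀ (Tt : Finset (Fin (2 * n))) (bb : Bool),
      ∑ i ∈ Tt, g i = ∑ i ∈ Ttᶜ, g i →
      ∑ i ∈ (Tt.map ι ∪ {if bb then e0 else e1}), gh i
        = ∑ i ∈ (Tt.map ι ∪ {if bb then e0 else e1})ᶜ, gh i := by
    intro Tt bb h
    have p0 := he0bwd Tt bb
    have p1 := he1bwd Tt bb
    rw [hsplit, hsplit, hTcompl, hTbwd]
    simp only [Finset.mem_compl]
    cases bb
    · have q0 : e0 ∉ Tt.map ι ∪ {if false then e0 else e1} := fun hh => by simpa using p0.mp hh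
      have q1 : e1 ∈ Tt.map ι ∪ {if false then e0 else e1} := p1.mpr rfl
      rw [if_neg q0, if_pos q1, if_pos q0, if_neg (not_not_intro q1)]
      linarith
    · have q0 : e0 ∈ Tt.map ι ∪ {if true then e0 else e1} := p0.mpr rfl
      have q1 : e1 ∉ Tt.map ι ∪ {if true then e0 else e1} := fun hh => by simpa using p1.mp hh
      rw [if_pos q0, if_neg q1, if_neg (not_not_intro q0), if_pos q1]
      linarith
  constructor
  · -- part (i)
    intro S hS
    obtain ⟨hiff, hTsum⟩ := hkey S hS
    have hcardT : (T S).card = n := hbal _ hTsum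
    have hcard := congrArg Finset.card (hdecomp S)
    rw [Finset.card_union_of_disjoint (hdisj S), Finset.card_map, hfilt S hiff,
      Finset.card_singleton] at hcard
    have hE0 : (⟨2 * n, by omega⟩ : Fin (2 * n + 2)) = e0 := Fin.ext (by simp [he0val])
    have hE1 : (⟨2 * n + 1, by omega⟩ : Fin (2 * n + 2)) = e1 := Fin.ext (by simp [he1val])
    rw [hE0, hE1]
    exact ⟨by omega, hiff⟩
  · -- part (ii)
    refine Eq.trans
      (Finset.card_bij'
        (t := (Finset.univ.filter
          (fun S : Finset (Fin (2 * n)) => ∑ i ∈ S, g i = ∑ i ∈ Sᶜ, g i))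
            ×ˢ (Finset.univ : Finset Bool))
        (fun S _ => (T S, if e0 ∈ S then true else false))
        (fun p _ => p.1.map ι ∪ {if p.2 then e0 else e1}) ?_ ?_ ?_ ?_) ?_
    · -- forward membership
      intro S hS
      rw [Finset.mem_filter] at hS
      rw [Finset.mem_product]
      exact ⟨Finset.mem_filter.mpr ⟨Finset.mem_univ _, (hkey S hS.2).2⟩, Finset.mem_univ _⟩
    · -- backward membership
      rintro ⟨Tt, bb⟩ hp
      rw [Finset.mem_product, Finset.mem_filter] at hp
      exact Finset.mem_filter.mpr ⟨Finset.mem_univ _, hbwdsum Tt bb hp.1.2⟩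
    · -- left inverse
      intro S hS
      rw [Finset.mem_filter] at hS
      have hiff := (hkey S hS.2).1
      by_cases h0 : e0 ∈ S
      · simp only [h0, if_true]
        conv_rhs => rw [hdecomp S]
        congr 1
        rw [hfilt S hiff, if_pos h0]
      · simp only [h0, if_false, Bool.false_eq_true]
        conv_rhs => rw [hdecomp S]
        congr 1
        rw [hfilt S hiff, if_neg h0]
    · -- right inverse
      rintro ⟨Tt, bb⟩ hp
      have h1 : T (Tt.map ι ∪ {if bb then e0 else e1}) = Tt := hTbwd Tt bb
      have h2 : (if e0 ∈ Tt.map ι ∪ {if bb then e0 else e1} then true else false) = bb := by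
        cases bb
        · rw [if_neg (fun hh => by simpa using (he0bwd Tt false).mp hh)]
        · rw [if_pos ((he0bwd Tt true).mpr rfl)]
      simp only [h1, h2]
    · rw [Finset.card_product, Finset.card_univ, Fintype.card_bool]
      ring
end

section
/- Let n ≥ 1 be a natural number and let f : Fin n → ℕ satisfy f(i) ≥ 1 for all i; set t = ∑_{i} f(i). Define f_0 : Fin (n+2) → ℕ by f_0(i) = f(i) for the first n indices and f_0(i) = t for the remaining two indices. Then the number of subsets S ⊆ Fin (n+2) with 2|S| = n + 2 that are equal-sum subsets for f_0 equals twice the number of subsets S ⊆ Fin n with 2|S| = n that are equal-sum subsets for f. -/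
private def emb (n : ℕ) : Fin n ↪ Fin (n + 2) :=
  ⟨fun i => ⟨i.1, by omega⟩, by
    intro a b h
    simpa [Fin.ext_iff] using congrArg Fin.val h⟩

private def down {n : ℕ} (S : Finset (Fin (n + 2))) : Finset (Fin n) :=
  Finset.univ.filter fun i => emb n i ∈ S

private lemma mem_down {n : ℕ} {S : Finset (Fin (n + 2))} {i : Fin n} :
    i ∈ down S ↔ emb n i ∈ S := by simp [down]

private lemma emb_val {n : ℕ} (i : Fin n) : (emb n i : ℕ) = i.1 := rfl

private lemma not_mem_map {n : ℕ} {e : Fin (n + 2)} (he : n ≤ e.1) (T : Finset (Fin n)) :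
    e ∉ T.map (emb n) := by
  simp only [Finset.mem_map]
  rintro ⟨i, -, hi⟩
  have : (emb n i : ℕ) = e.1 := congrArg Fin.val hi
  rw [emb_val] at this
  have := i.isLt
  omega

private lemma down_up {n : ℕ} {e : Fin (n + 2)} (he : n ≤ e.1) (T : Finset (Fin n)) :
    down (insert e (T.map (emb n))) = T := by
  ext i
  simp only [mem_down, Finset.mem_insert, Finset.mem_map]
  constructor
  · rintro (h | h)
    · have : (emb n i : ℕ) = e.1 := congrArg Fin.val h
      rw [emb_val] at this
      have := i.isLt
      omega
    · rcases h with ⟨j, hj, hji⟩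
      rwa [(emb n).injective hji] at hj
  · intro h
    exact Or.inr ⟨i, h, rfl⟩

private lemma up_down {n : ℕ} {e : Fin (n + 2)} (he : n ≤ e.1) {S : Finset (Fin (n + 2))}
    (heS : e ∈ S) (hS : ∀ j ∈ S, j ≠ e → (j : ℕ) < n) :
    insert e ((down S).map (emb n)) = S := by
  ext j
  simp only [Finset.mem_insert, Finset.mem_map, mem_down]
  constructor
  · rintro (rfl | ⟨i, hi, rfl⟩)
    · exact heS
    · exact hi
  · intro hj
    by_cases hje : j = e
    · exact Or.inl hje
    · have hlt : (j : ℕ) < n := hS j hj hje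
      exact Or.inr ⟨⟨j.1, hlt⟩, by
        have : emb n ⟨j.1, hlt⟩ = j := Fin.ext rfl
        rw [this]; exact ⟨hj, rfl⟩⟩

/-- Let `n ≥ 1`, `f : Fin n → ℕ` with `f i ≥ 1`, and `t = ∑ f i`.  Define
`f0 : Fin (n+2) → ℕ` agreeing with `f` on the first `n` indices and equal to `t` on the last
two.  Then the number of subsets `S` with `2|S| = n+2` which are equal-sum for `f0` is twice
the number of subsets `S ⊆ Fin n` with `2|S| = n` which are equal-sum for `f`. -/
theorem stmt7 (n : ℕ) (hn : 1 ≤ n) (f : Fin n → ℕ) (hf : ∀ i, 1 ≤ f i)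
    (t : ℕ) (ht : t = ∑ i, f i)
    (f0 : Fin (n + 2) → ℕ)
    (hf0 : ∀ i : Fin (n + 2), f0 i = if h : (i : ℕ) < n then f ⟨i, h⟩ else t) :
    (Finset.univ.filter
        (fun S : Finset (Fin (n + 2)) =>
          2 * S.card = n + 2 ∧ ∑ i ∈ S, f0 i = ∑ i ∈ Sᶜ, f0 i)).card
      = 2 * (Finset.univ.filter
          (fun S : Finset (Fin n) =>
            2 * S.card = n ∧ ∑ i ∈ S, f i = ∑ i ∈ Sᶜ, f i)).card := by
  classical
  set e1 : Fin (n + 2) := ⟨n, by omega⟩ with he1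
  set e2 : Fin (n + 2) := ⟨n + 1, by omega⟩ with he2
  have he1ne2 : e1 ≠ e2 := by
    intro h
    have := congrArg Fin.val h
    simp [he1, he2] at this
  have hf0e1 : f0 e1 = t := by rw [hf0]; simp [he1]
  have hf0e2 : f0 e2 = t := by rw [hf0]; simp [he2]
  have hf0emb : ∀ i : Fin n, f0 (emb n i) = f i := by
    intro i
    rw [hf0, dif_pos (show ((emb n i : ℕ) < n) from i.isLt)]
    exact congrArg f (Fin.ext rfl)
  have tpos : 1 ≤ t := by
    have h1 : (Finset.univ : Finset (Fin n)).sum (fun _ => 1) ≤ ∑ i, f i :=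
      Finset.sum_le_sum fun i _ => hf i
    simp at h1
    omega
  -- total sum of f0 is 3t
  have huniv : (Finset.univ : Finset (Fin (n + 2)))
      = insert e1 (insert e2 (Finset.univ.map (emb n))) := by
    ext j
    simp only [Finset.mem_univ, Finset.mem_insert, Finset.mem_map, true_iff]
    by_cases h : (j : ℕ) < n
    · exact Or.inr (Or.inr ⟨⟨j.1, h⟩, trivial, Fin.ext rfl⟩)
    · have := j.isLt
      rcases (by omega : (j : ℕ) = n ∨ (j : ℕ) = n + 1) with h' | h'
      · exact Or.inl (Fin.ext h')
      · exact Or.inr (Or.inl (Fin.ext h'))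
  have htotal : ∑ i, f0 i = 3 * t := by
    rw [huniv, Finset.sum_insert, Finset.sum_insert, Finset.sum_map]
    · simp only [hf0emb, hf0e1, hf0e2, ← ht]
      ring
    · exact not_mem_map (by simp [he2]) _
    · simp only [Finset.mem_insert]
      push_neg
      exact ⟨he1ne2, not_mem_map (by simp [he1]) _⟩
  have hsum2 : ∀ S : Finset (Fin (n + 2)), ∑ i ∈ S, f0 i + ∑ i ∈ Sᶜ, f0 i = 3 * t := by
    intro S
    rw [Finset.sum_add_sum_compl, htotal]
  have hsumf : ∀ T : Finset (Fin n), ∑ i ∈ T, f i + ∑ i ∈ Tᶜ, f i = t := by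
    intro T
    rw [Finset.sum_add_sum_compl, ht]
  -- sum over up e T
  have hsumup : ∀ (e : Fin (n + 2)), f0 e = t → n ≤ e.1 → ∀ T : Finset (Fin n),
      ∑ i ∈ insert e (T.map (emb n)), f0 i = t + ∑ i ∈ T, f i := by
    intro e he hen T
    rw [Finset.sum_insert (not_mem_map hen T), Finset.sum_map, he]
    simp only [hf0emb]
  have hcardup : ∀ (e : Fin (n + 2)), n ≤ e.1 → ∀ T : Finset (Fin n),
      (insert e (T.map (emb n))).card = T.card + 1 := by
    intro e hen T
    rw [Finset.card_insert_of_notMem (not_mem_map hen T), Finset.card_map]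
  set A := Finset.univ.filter
      (fun S : Finset (Fin (n + 2)) =>
        2 * S.card = n + 2 ∧ ∑ i ∈ S, f0 i = ∑ i ∈ Sᶜ, f0 i) with hA
  set B := Finset.univ.filter
      (fun S : Finset (Fin n) =>
        2 * S.card = n ∧ ∑ i ∈ S, f i = ∑ i ∈ Sᶜ, f i) with hB
  -- exactly one of e1, e2 in S, for S ∈ A
  have hone : ∀ S ∈ A, (e1 ∈ S ∧ e2 ∉ S) ∨ (e2 ∈ S ∧ e1 ∉ S) := by
    intro S hS
    rw [hA, Finset.mem_filter] at hS
    obtain ⟨-, -, hsum⟩ := hS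
    have h3 := hsum2 S
    have hSsum : 2 * ∑ i ∈ S, f0 i = 3 * t := by omega
    have hpair : ∑ i ∈ ({e1, e2} : Finset (Fin (n + 2))), f0 i = 2 * t := by
      rw [Finset.sum_pair he1ne2, hf0e1, hf0e2]; ring
    by_cases h1 : e1 ∈ S <;> by_cases h2 : e2 ∈ S
    · exfalso
      have hsub : ({e1, e2} : Finset (Fin (n + 2))) ⊆ S := by
        intro x hx
        simp only [Finset.mem_insert, Finset.mem_singleton] at hx
        rcases hx with rfl | rfl <;> assumption
      have := Finset.sum_le_sum_of_subset (f := f0) hsub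
      rw [hpair] at this
      omega
    · exact Or.inl ⟨h1, h2⟩
    · exact Or.inr ⟨h2, h1⟩
    · exfalso
      have hsub : ({e1, e2} : Finset (Fin (n + 2))) ⊆ Sᶜ := by
        intro x hx
        simp only [Finset.mem_insert, Finset.mem_singleton] at hx
        rcases hx with rfl | rfl <;> simp [Finset.mem_compl, h1, h2]
      have := Finset.sum_le_sum_of_subset (f := f0) hsub
      rw [hpair] at this
      omega
  -- generic part count
  have key : ∀ (e e' : Fin (n + 2)), f0 e = t → n ≤ e.1 → n ≤ e'.1 → e ≠ e' →
      (A.filter (fun S => e ∈ S ∧ e' ∉ S)).card = B.card := by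
    intro e e' he hen hen' hee'
    apply Finset.card_bij' (fun S _ => down S) (fun T _ => insert e (T.map (emb n)))
    · -- forward membership
      intro S hS
      rw [Finset.mem_filter] at hS
      obtain ⟨hSA, heS, he'S⟩ := hS
      rw [hA, Finset.mem_filter] at hSA
      obtain ⟨-, hcard, hsum⟩ := hSA
      have hud : insert e ((down S).map (emb n)) = S := by
        apply up_down hen heS
        intro j hj hje
        have hjlt := j.isLt
        by_contra h
        have : (j : ℕ) = n ∨ (j : ℕ) = n + 1 := by omega
        have he'' : j = e ∨ j = e' := by
          have h1 := (show n ≤ e.1 from hen)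
          have h2 := (show n ≤ e'.1 from hen')
          have h3 := e.isLt
          have h4 := e'.isLt
          rcases this with h5 | h5
          · by_cases hw : (e : ℕ) = n
            · exact Or.inl (Fin.ext (by omega))
            · have : (e' : ℕ) = n := by
                by_contra hw'
                have : (e : ℕ) = n + 1 ∧ (e' : ℕ) = n + 1 := by omega
                exact hee' (Fin.ext (by omega))
              exact Or.inr (Fin.ext (by omega))
          · by_cases hw : (e : ℕ) = n + 1
            · exact Or.inl (Fin.ext (by omega))
            · have : (e' : ℕ) = n + 1 := by omega
              exact Or.inr (Fin.ext (by omega))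
        rcases he'' with rfl | rfl
        · exact hje rfl
        · exact he'S hj
      rw [hB, Finset.mem_filter]
      refine ⟨by simp, ?_, ?_⟩
      · have := hcardup e hen (down S)
        rw [hud] at this
        omega
      · have hs := hsumup e he hen (down S)
        rw [hud] at hs
        have h3 := hsum2 S
        have hf3 := hsumf (down S)
        omega
    · -- backward membership
      intro T hT
      rw [hB, Finset.mem_filter] at hT
      obtain ⟨-, hcard, hsum⟩ := hT
      rw [Finset.mem_filter]
      refine ⟨?_, Finset.mem_insert_self _ _, ?_⟩
      · rw [hA, Finset.mem_filter]
        refine ⟨by simp, ?_, ?_⟩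
        · rw [hcardup e hen T]; omega
        · have hs := hsumup e he hen T
          have h3 := hsum2 (insert e (T.map (emb n)))
          have hf3 := hsumf T
          omega
      · simp only [Finset.mem_insert]
        push_neg
        exact ⟨fun h => hee' h.symm, not_mem_map hen' T⟩
    · -- left inverse
      intro S hS
      rw [Finset.mem_filter] at hS
      obtain ⟨hSA, heS, he'S⟩ := hS
      apply up_down hen heS
      intro j hj hje
      have := hone S hSA
      by_contra h
      have hjlt := j.isLt
      have hj' : (j : ℕ) = n ∨ (j : ℕ) = n + 1 := by omega
      have hje1 : j = e1 ∨ j = e2 := by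
        rcases hj' with h5 | h5
        · exact Or.inl (Fin.ext h5)
        · exact Or.inr (Fin.ext h5)
      -- e is e1 or e2 too
      have hens := e.isLt
      have hee : e = e1 ∨ e = e2 := by
        rcases (by omega : (e : ℕ) = n ∨ (e : ℕ) = n + 1) with h5 | h5
        · exact Or.inl (Fin.ext h5)
        · exact Or.inr (Fin.ext h5)
      rcases this with ⟨h1, h2⟩ | ⟨h1, h2⟩ <;> rcases hje1 with rfl | rfl <;>
        rcases hee with rfl | rfl <;> first
          | exact h2 hj | exact h2 heS | exact hje rfl
    · intro T _
      exact down_up hen T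
  -- put it together
  have hsplit : A.card = (A.filter (fun S => e1 ∈ S ∧ e2 ∉ S)).card
      + (A.filter (fun S => e2 ∈ S ∧ e1 ∉ S)).card := by
    have hdisj : Disjoint (A.filter (fun S => e1 ∈ S ∧ e2 ∉ S))
        (A.filter (fun S => e2 ∈ S ∧ e1 ∉ S)) := by
      rw [Finset.disjoint_filter]
      rintro S _ ⟨h1, h2⟩ ⟨h3, h4⟩
      exact h2 h3
    calc A.card = ((A.filter (fun S => e1 ∈ S ∧ e2 ∉ S))
          ∪ (A.filter (fun S => e2 ∈ S ∧ e1 ∉ S))).card := by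
          rw [← Finset.filter_or, Finset.filter_true_of_mem hone]
      _ = _ := Finset.card_union_of_disjoint hdisj
  have k1 := key e1 e2 hf0e1 (by simp [he1]) (by simp [he2]) he1ne2
  have k2 := key e2 e1 hf0e2 (by simp [he2]) (by simp [he1]) (Ne.symm he1ne2)
  omega
end

section
/- Let n ≥ 1 and k ≥ 1 be natural numbers and let f : Fin n → ℕ satisfy f(i) ≥ 1 for all i; set t = ∑_{i} f(i). Define f_k : Fin (n+k+2) → ℕ by f_k(i) = f(i) for the first n indices, f_k(i) = t for the next k+1 indices, and f_k(i) = (k+1)·t for the last index. Then the number of subsets S ⊆ Fin (n+k+2) with 2|S| = n + k + 2 that are equal-sum subsets for f_k equals the number of subsets S ⊆ Fin n that are equal-sum subsets for f and satisfy either |S| + k = |Sᶜ| or |Sᶜ| + k = |S| (where Sᶜ is the complement of S in Fin n). -/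
namespace Stmt8

variable (n k : ℕ)

def mid : Finset (Fin (n + k + 2)) :=
  Finset.univ.filter (fun i => n ≤ (i : ℕ) ∧ (i : ℕ) < n + k + 1)

def lastIdx : Fin (n + k + 2) := ⟨n + k + 1, by omega⟩

def emb : Fin n ↪ Fin (n + k + 2) := Fin.castLEEmb (by omega)

def phi (S : Finset (Fin (n + k + 2))) : Finset (Fin n) :=
  Finset.univ.filter (fun j => emb n k j ∈ S)

def psi (T : Finset (Fin n)) : Finset (Fin (n + k + 2)) :=
  if 2 * T.card = n + k then insert (lastIdx n k) (T.map (emb n k))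
  else (T.map (emb n k)) ∪ mid n k

lemma emb_val (j : Fin n) : ((emb n k j : Fin (n + k + 2)) : ℕ) = (j : ℕ) := rfl

lemma mem_mid {i : Fin (n + k + 2)} : i ∈ mid n k ↔ n ≤ (i : ℕ) ∧ (i : ℕ) < n + k + 1 := by
  simp [mid]

lemma card_mid : (mid n k).card = k + 1 := by
  have h : mid n k = Finset.Ico (⟨n, by omega⟩ : Fin (n + k + 2)) ⟨n + k + 1, by omega⟩ := by
    ext i
    simp [mem_mid, Finset.mem_Ico, Fin.le_def, Fin.lt_def]
  rw [h, Fin.card_Ico]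
  simp only [Fin.val_mk]
  omega

lemma decomp (S : Finset (Fin (n + k + 2))) :
    S = ((phi n k S).map (emb n k) ∪ (S ∩ mid n k)) ∪ (S ∩ {lastIdx n k}) := by
  ext i
  simp only [Finset.mem_union, Finset.mem_inter, Finset.mem_map, phi, Finset.mem_filter,
    Finset.mem_univ, true_and, Finset.mem_singleton, mem_mid]
  constructor
  · intro hi
    rcases lt_or_ge (i : ℕ) n with h | h
    · exact Or.inl (Or.inl ⟨⟨i, h⟩, by simpa [emb, Fin.castLEEmb, Fin.ext_iff] using hi,
        by simp [emb, Fin.castLEEmb, Fin.ext_iff]⟩)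
    · rcases lt_or_ge (i : ℕ) (n + k + 1) with h2 | h2
      · exact Or.inl (Or.inr ⟨hi, h, h2⟩)
      · have : (i : ℕ) = n + k + 1 := by omega
        exact Or.inr ⟨hi, by simp [lastIdx, Fin.ext_iff, this]⟩
  · rintro ((⟨j, hj, hji⟩ | ⟨hi, -⟩) | ⟨hi, -⟩) <;> first | exact hji ▸ hj | exact hi

lemma disj1 (S : Finset (Fin (n + k + 2))) :
    Disjoint ((phi n k S).map (emb n k)) (S ∩ mid n k) := by
  rw [Finset.disjoint_left]
  intro i hi1 hi2
  obtain ⟨j, -, rfl⟩ := Finset.mem_map.1 hi1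
  have h2 := (mem_mid n k).1 (Finset.mem_inter.1 hi2).2
  rw [emb_val] at h2
  have := j.isLt
  omega

lemma disj2 (S : Finset (Fin (n + k + 2))) :
    Disjoint ((phi n k S).map (emb n k) ∪ (S ∩ mid n k)) (S ∩ {lastIdx n k}) := by
  rw [Finset.disjoint_right]
  intro i hi hL
  have hi' : i = lastIdx n k := (Finset.mem_singleton.1 (Finset.mem_inter.1 hi).2)
  subst hi'
  rcases Finset.mem_union.1 hL with h | h
  · obtain ⟨j, -, hj⟩ := Finset.mem_map.1 h
    have : (j : ℕ) = n + k + 1 := by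
      simpa [emb, Fin.castLEEmb, Fin.castLE, Fin.ext_iff, lastIdx] using hj
    omega
  · have := (mem_mid n k).1 (Finset.mem_inter.1 h).2
    simp only [lastIdx] at this
    omega

lemma card_decomp (S : Finset (Fin (n + k + 2))) :
    S.card = (phi n k S).card + (S ∩ mid n k).card
      + (if lastIdx n k ∈ S then 1 else 0) := by
  conv_lhs => rw [decomp n k S]
  rw [Finset.card_union_of_disjoint (disj2 n k S),
    Finset.card_union_of_disjoint (disj1 n k S), Finset.card_map]
  congr 1
  by_cases h : lastIdx n k ∈ S <;> simp [h, Finset.inter_singleton_of_mem,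
    Finset.inter_singleton_of_notMem]

variable (f : Fin n → ℕ) (t : ℕ) (fk : Fin (n + k + 2) → ℕ)

lemma sum_decomp
    (hfk : ∀ i : Fin (n + k + 2),
      fk i = if h : (i : ℕ) < n then f ⟨i, h⟩
        else if (i : ℕ) < n + k + 1 then t else (k + 1) * t)
    (S : Finset (Fin (n + k + 2))) :
    ∑ i ∈ S, fk i = (∑ j ∈ phi n k S, f j) + (S ∩ mid n k).card * t
      + (if lastIdx n k ∈ S then (k + 1) * t else 0) := by
  conv_lhs => rw [decomp n k S]
  rw [Finset.sum_union (disj2 n k S), Finset.sum_union (disj1 n k S), Finset.sum_map]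
  have e1 : ∑ j ∈ phi n k S, fk (emb n k j) = ∑ j ∈ phi n k S, f j := by
    apply Finset.sum_congr rfl
    intro j _
    rw [hfk, dif_pos (by rw [emb_val]; exact j.isLt)]
    exact congrArg f (Fin.ext (emb_val n k j))
  have e2 : ∑ i ∈ S ∩ mid n k, fk i = (S ∩ mid n k).card * t := by
    have hc : ∀ i ∈ S ∩ mid n k, fk i = t := by
      intro i hi
      have := (mem_mid n k).1 (Finset.mem_inter.1 hi).2
      rw [hfk, dif_neg (by omega), if_pos (by omega)]
    rw [Finset.sum_congr rfl hc, Finset.sum_const, smul_eq_mul]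
  have e3 : ∑ i ∈ S ∩ {lastIdx n k}, fk i
      = (if lastIdx n k ∈ S then (k + 1) * t else 0) := by
    by_cases h : lastIdx n k ∈ S
    · rw [Finset.inter_singleton_of_mem h, Finset.sum_singleton, if_pos h, hfk]
      rw [dif_neg (by simp only [lastIdx]; omega), if_neg (by simp only [lastIdx]; omega)]
    · rw [Finset.inter_singleton_of_notMem h, if_neg h, Finset.sum_empty]
  rw [e1, e2, e3]


lemma fk_last
    (hfk : ∀ i : Fin (n + k + 2),
      fk i = if h : (i : ℕ) < n then f ⟨i, h⟩
        else if (i : ℕ) < n + k + 1 then t else (k + 1) * t) :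
    fk (lastIdx n k) = (k + 1) * t := by
  rw [hfk, dif_neg (by simp only [lastIdx]; omega), if_neg (by simp only [lastIdx]; omega)]

lemma sum_map_emb
    (hfk : ∀ i : Fin (n + k + 2),
      fk i = if h : (i : ℕ) < n then f ⟨i, h⟩
        else if (i : ℕ) < n + k + 1 then t else (k + 1) * t)
    (T : Finset (Fin n)) :
    ∑ i ∈ T.map (emb n k), fk i = ∑ j ∈ T, f j := by
  rw [Finset.sum_map]
  apply Finset.sum_congr rfl
  intro j _
  rw [hfk, dif_pos (by rw [emb_val]; exact j.isLt)]
  exact congrArg f (Fin.ext (emb_val n k j))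

lemma sum_mid
    (hfk : ∀ i : Fin (n + k + 2),
      fk i = if h : (i : ℕ) < n then f ⟨i, h⟩
        else if (i : ℕ) < n + k + 1 then t else (k + 1) * t) :
    ∑ i ∈ mid n k, fk i = (k + 1) * t := by
  have hc : ∀ i ∈ mid n k, fk i = t := by
    intro i hi
    have := (mem_mid n k).1 hi
    rw [hfk, dif_neg (by omega), if_pos (by omega)]
  rw [Finset.sum_congr rfl hc, Finset.sum_const, smul_eq_mul, card_mid]

lemma last_not_mem_map (T : Finset (Fin n)) : lastIdx n k ∉ T.map (emb n k) := by
  intro h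
  obtain ⟨j, -, hj⟩ := Finset.mem_map.1 h
  have h1 : (j : ℕ) = n + k + 1 := by
    have := congrArg Fin.val hj
    rwa [emb_val] at this
  have := j.isLt
  omega

lemma last_not_mem_mid : lastIdx n k ∉ mid n k := by
  rw [mem_mid]
  simp only [lastIdx]
  omega

lemma disjoint_map_mid (T : Finset (Fin n)) : Disjoint (T.map (emb n k)) (mid n k) := by
  rw [Finset.disjoint_left]
  intro i hi1 hi2
  obtain ⟨j, -, rfl⟩ := Finset.mem_map.1 hi1
  have h2 := (mem_mid n k).1 hi2
  rw [emb_val] at h2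
  have := j.isLt
  omega

lemma phi_psi (T : Finset (Fin n)) : phi n k (psi n k T) = T := by
  ext j
  have hne : emb n k j ≠ lastIdx n k := by
    intro h
    have := congrArg Fin.val h
    rw [emb_val] at this
    simp only [lastIdx] at this
    have := j.isLt
    omega
  have hnm : emb n k j ∉ mid n k := by
    rw [mem_mid, emb_val]
    have := j.isLt
    omega
  have hmm : emb n k j ∈ T.map (emb n k) ↔ j ∈ T := Finset.mem_map' _
  simp only [phi, Finset.mem_filter, Finset.mem_univ, true_and, psi]
  split_ifs with h
  · rw [Finset.mem_filter_univ, Finset.mem_insert]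
    simp [hne, hmm]
  · rw [Finset.mem_filter_univ, Finset.mem_union]
    simp [hnm, hmm]

end Stmt8

/-- Let `n, k ≥ 1`, `f : Fin n → ℕ` with `f i ≥ 1`, and `t = ∑ f i`.  Define
`fk : Fin (n+k+2) → ℕ` agreeing with `f` on the first `n` indices, equal to `t` on the next
`k+1` indices, and equal to `(k+1)·t` on the last index.  Then the number of subsets `S` with
`2|S| = n+k+2` which are equal-sum for `fk` equals the number of equal-sum subsets `S ⊆ Fin n`
for `f` satisfying `|S| + k = |Sᶜ|` or `|Sᶜ| + k = |S|`. -/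
theorem stmt8 (n k : ℕ) (hn : 1 ≤ n) (hk : 1 ≤ k) (f : Fin n → ℕ) (hf : ∀ i, 1 ≤ f i)
    (t : ℕ) (ht : t = ∑ i, f i)
    (fk : Fin (n + k + 2) → ℕ)
    (hfk : ∀ i : Fin (n + k + 2),
      fk i = if h : (i : ℕ) < n then f ⟨i, h⟩
        else if (i : ℕ) < n + k + 1 then t else (k + 1) * t) :
    (Finset.univ.filter
        (fun S : Finset (Fin (n + k + 2)) =>
          2 * S.card = n + k + 2 ∧ ∑ i ∈ S, fk i = ∑ i ∈ Sᶜ, fk i)).card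
      = (Finset.univ.filter
          (fun S : Finset (Fin n) =>
            (∑ i ∈ S, f i = ∑ i ∈ Sᶜ, f i) ∧
              (S.card + k = Sᶜ.card ∨ Sᶜ.card + k = S.card))).card := by
  classical
  have htpos : 1 ≤ t := by
    rw [ht]
    calc 1 ≤ f ⟨0, hn⟩ := hf _
    _ ≤ ∑ i, f i := Finset.single_le_sum (fun i _ => Nat.zero_le _) (Finset.mem_univ _)
  -- facts about complements
  have hcomplf : ∀ T : Finset (Fin n), ∑ i ∈ T, f i + ∑ i ∈ Tᶜ, f i = t := by
    intro T; rw [ht]; exact Finset.sum_add_sum_compl T f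
  have hcardc : ∀ T : Finset (Fin n), Tᶜ.card = n - T.card := by
    intro T; rw [Finset.card_compl, Fintype.card_fin]
  have hcardle : ∀ T : Finset (Fin n), T.card ≤ n := by
    intro T
    have := Finset.card_le_card (Finset.subset_univ T)
    simpa using this
  have hcomplfk : ∀ S : Finset (Fin (n + k + 2)),
      ∑ i ∈ S, fk i + ∑ i ∈ Sᶜ, fk i = (2 * k + 3) * t := by
    intro S
    rw [Finset.sum_add_sum_compl S fk]
    have h1 : Stmt8.phi n k (Finset.univ) = Finset.univ := by
      simp [Stmt8.phi]
    have h2 : (Finset.univ ∩ Stmt8.mid n k) = Stmt8.mid n k := Finset.univ_inter _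
    rw [Stmt8.sum_decomp n k f t fk hfk Finset.univ, h1, h2, Stmt8.card_mid,
      if_pos (Finset.mem_univ _), ← ht]
    ring
  -- structure of elements of the left-hand side
  have hstruct : ∀ S : Finset (Fin (n + k + 2)),
      2 * S.card = n + k + 2 → 2 * ∑ i ∈ S, fk i = (2 * k + 3) * t →
      (2 * ∑ j ∈ Stmt8.phi n k S, f j = t) ∧
      ((Stmt8.lastIdx n k ∈ S ∧ S ∩ Stmt8.mid n k = ∅ ∧
          2 * (Stmt8.phi n k S).card = n + k) ∨
        (Stmt8.lastIdx n k ∉ S ∧ S ∩ Stmt8.mid n k = Stmt8.mid n k ∧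
          2 * (Stmt8.phi n k S).card + k = n)) := by
    intro S hc hs
    rw [Stmt8.sum_decomp n k f t fk hfk S] at hs
    rw [Stmt8.card_decomp n k S] at hc
    have hmle : (S ∩ Stmt8.mid n k).card ≤ k + 1 := by
      rw [← Stmt8.card_mid n k]
      exact Finset.card_le_card (Finset.inter_subset_right)
    have hFle : ∑ j ∈ Stmt8.phi n k S, f j ≤ t := by
      rw [ht]
      exact Finset.sum_le_sum_of_subset (Finset.subset_univ _)
    by_cases hl : Stmt8.lastIdx n k ∈ S
    · rw [if_pos hl] at hs hc
      have e1 : 2 * (∑ j ∈ Stmt8.phi n k S, f j + (S ∩ Stmt8.mid n k).card * t + (k + 1) * t)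
          = 2 * (∑ j ∈ Stmt8.phi n k S, f j) + 2 * ((S ∩ Stmt8.mid n k).card * t)
            + (2 * k + 2) * t := by ring
      have e2 : (2 * k + 3) * t = (2 * k + 2) * t + t := by ring
      rw [e1, e2] at hs
      have key : (S ∩ Stmt8.mid n k).card = 0 ∧ 2 * ∑ j ∈ Stmt8.phi n k S, f j = t := by
        rcases Nat.eq_zero_or_pos (S ∩ Stmt8.mid n k).card with h | h
        · rw [h] at hs
          simp only [Nat.zero_mul, Nat.mul_zero, Nat.add_zero] at hs
          generalize (2 * k + 2) * t = C at hs
          exact ⟨h, by omega⟩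
        · exfalso
          have h2 : t ≤ (S ∩ Stmt8.mid n k).card * t := Nat.le_mul_of_pos_left t h
          generalize (S ∩ Stmt8.mid n k).card * t = M at hs h2
          generalize (2 * k + 2) * t = C at hs
          omega
      obtain ⟨hm0, hF2⟩ := key
      rw [hm0] at hc
      exact ⟨hF2, Or.inl ⟨hl, Finset.card_eq_zero.1 hm0, by omega⟩⟩
    · rw [if_neg hl] at hs hc
      have e1 : 2 * (∑ j ∈ Stmt8.phi n k S, f j + (S ∩ Stmt8.mid n k).card * t + 0)
          = 2 * (∑ j ∈ Stmt8.phi n k S, f j) + 2 * ((S ∩ Stmt8.mid n k).card * t) := by ring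
      have e2 : (2 * k + 3) * t = 2 * (k * t) + 2 * t + t := by ring
      rw [e1, e2] at hs
      have hmk : (S ∩ Stmt8.mid n k).card = k + 1 := by
        rcases le_or_gt (S ∩ Stmt8.mid n k).card k with h | h
        · exfalso
          have h4 : (S ∩ Stmt8.mid n k).card * t ≤ k * t := Nat.mul_le_mul_right t h
          generalize (S ∩ Stmt8.mid n k).card * t = M at hs h4
          generalize k * t = K at hs h4
          omega
        · omega
      rw [hmk] at hs hc
      have e3 : 2 * ((k + 1) * t) = 2 * (k * t) + 2 * t := by ring
      rw [e3] at hs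
      have hF2 : 2 * ∑ j ∈ Stmt8.phi n k S, f j = t := by
        generalize k * t = K at hs
        omega
      refine ⟨hF2, Or.inr ⟨hl, ?_, by omega⟩⟩
      apply Finset.eq_of_subset_of_card_le (Finset.inter_subset_right)
      rw [Stmt8.card_mid, hmk]
  apply Finset.card_nbij' (Stmt8.phi n k) (Stmt8.psi n k)
  · -- forward
    intro S hS
    rw [Finset.mem_coe, Finset.mem_filter] at hS ⊢
    obtain ⟨-, hc, hs⟩ := hS
    have hs' : 2 * ∑ i ∈ S, fk i = (2 * k + 3) * t := by
      have := hcomplfk S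
      omega
    obtain ⟨hsum, hcase⟩ := hstruct S hc hs'
    refine ⟨Finset.mem_univ _, ?_, ?_⟩
    · have := hcomplf (Stmt8.phi n k S)
      omega
    · rw [hcardc]
      have := hcardle (Stmt8.phi n k S)
      rcases hcase with ⟨-, -, h⟩ | ⟨-, -, h⟩
      · right; omega
      · left; omega
  · -- backward
    intro T hT
    rw [Finset.mem_coe, Finset.mem_filter] at hT ⊢
    obtain ⟨-, hs, hcard⟩ := hT
    have hsum : 2 * ∑ i ∈ T, f i = t := by
      have := hcomplf T; omega
    rw [hcardc] at hcard
    have hTle := hcardle T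
    refine ⟨Finset.mem_univ _, ?_⟩
    by_cases hcase : 2 * T.card = n + k
    · rw [Stmt8.psi, if_pos hcase]
      have hnm := Stmt8.last_not_mem_map n k T
      constructor
      · rw [Finset.card_insert_of_notMem hnm, Finset.card_map]
        omega
      · have h1 : ∑ i ∈ insert (Stmt8.lastIdx n k) (T.map (Stmt8.emb n k)), fk i
            = (k + 1) * t + ∑ i ∈ T, f i := by
          rw [Finset.sum_insert hnm, Stmt8.fk_last n k f t fk hfk,
            Stmt8.sum_map_emb n k f t fk hfk]
        have h2 := hcomplfk (insert (Stmt8.lastIdx n k) (T.map (Stmt8.emb n k)))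
        rw [h1] at h2 ⊢
        have h3 : 2 * ((k + 1) * t + ∑ i ∈ T, f i) = (2 * k + 2) * t + 2 * ∑ i ∈ T, f i := by
          ring
        have h4 : (2 * k + 2) * t + t = (2 * k + 3) * t := by ring
        omega
    · have hcase2 : 2 * T.card + k = n := by omega
      rw [Stmt8.psi, if_neg hcase]
      have hdisj := Stmt8.disjoint_map_mid n k T
      constructor
      · rw [Finset.card_union_of_disjoint hdisj, Finset.card_map, Stmt8.card_mid]
        omega
      · have h1 : ∑ i ∈ T.map (Stmt8.emb n k) ∪ Stmt8.mid n k, fk i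
            = ∑ i ∈ T, f i + (k + 1) * t := by
          rw [Finset.sum_union hdisj, Stmt8.sum_map_emb n k f t fk hfk,
            Stmt8.sum_mid n k f t fk hfk]
        have h2 := hcomplfk (T.map (Stmt8.emb n k) ∪ Stmt8.mid n k)
        rw [h1] at h2 ⊢
        have h3 : 2 * (∑ i ∈ T, f i + (k + 1) * t) = 2 * ∑ i ∈ T, f i + (2 * k + 2) * t := by
          ring
        have h4 : t + (2 * k + 2) * t = (2 * k + 3) * t := by ring
        omega
  · -- left inverse
    intro S hS
    rw [Finset.mem_coe, Finset.mem_filter] at hS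
    obtain ⟨-, hc, hs⟩ := hS
    have hs' : 2 * ∑ i ∈ S, fk i = (2 * k + 3) * t := by
      have := hcomplfk S
      omega
    obtain ⟨-, hcase⟩ := hstruct S hc hs'
    rcases hcase with ⟨hl, hmid, hcard⟩ | ⟨hl, hmid, hcard⟩
    · rw [Stmt8.psi, if_pos (by omega)]
      conv_rhs => rw [Stmt8.decomp n k S]
      rw [hmid, Finset.union_empty, Finset.inter_singleton_of_mem hl]
      rw [Finset.union_comm, ← Finset.insert_eq]
    · rw [Stmt8.psi, if_neg (by omega)]
      conv_rhs => rw [Stmt8.decomp n k S]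
      rw [hmid, Finset.inter_singleton_of_notMem hl, Finset.union_empty]
  · -- right inverse
    intro T _
    exact Stmt8.phi_psi n k T
end

section
/- Let n ≥ 1 be a natural number and let f : Fin n → ℕ satisfy f(i) ≥ 1 for all i; set t = ∑_{i} f(i). For each natural number k with 0 ≤ k ≤ n − 2, define f_k : Fin (n+k+2) → ℕ by f_k(i) = f(i) for the first n indices, f_k(i) = t for the next k+1 indices, and f_k(i) = (k+1)·t for the last index, and let E_k denote the number of subsets S ⊆ Fin (n+k+2) with 2|S| = n + k + 2 that are equal-sum subsets for f_k. Then 2 · #{S ⊆ Fin n : S is an equal-sum subset for f} = E_0 + 2 · ∑_{k=1}^{n−2} E_k. -/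
open Finset

section key

variable (n k : ℕ) (f : Fin n → ℕ) (t : ℕ)

/-- the augmented function -/
private def gfun : Fin (n + k + 2) → ℕ := fun i =>
  if h : (i : ℕ) < n then f ⟨i, h⟩ else if (i : ℕ) < n + k + 1 then t else (k + 1) * t

private def Lidx : Fin (n + k + 2) := ⟨n + k + 1, by omega⟩

private def Tmid : Finset (Fin (n + k + 2)) :=
  univ.filter (fun i => n ≤ (i : ℕ) ∧ (i : ℕ) < n + k + 1)

private def Aof (S : Finset (Fin (n + k + 2))) : Finset (Fin n) :=
  univ.filter (fun a : Fin n => Fin.castLE (by omega) a ∈ S)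

private lemma card_Tmid : (Tmid n k).card = k + 1 := by
  have h : Tmid n k = (Finset.Ico n (n + k + 1)).attachFin
      (fun m hm => by simp only [Finset.mem_Ico] at hm; omega) := by
    ext i
    simp [Tmid, Finset.mem_attachFin, Finset.mem_Ico]
  rw [h, Finset.card_attachFin, Nat.card_Ico]
  omega

private lemma mem_Aof (S : Finset (Fin (n + k + 2))) (a : Fin n) :
    a ∈ Aof n k S ↔ Fin.castLE (by omega) a ∈ S := by
  simp [Aof]

private lemma filter_lt_eq (S : Finset (Fin (n + k + 2))) :
    S.filter (fun i : Fin (n + k + 2) => (i : ℕ) < n) = (Aof n k S).map (Fin.castLEEmb (show n ≤ n + k + 2 by omega)) := by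
  ext i
  simp only [mem_filter, mem_map, Fin.castLEEmb_apply, mem_Aof]
  constructor
  · rintro ⟨hiS, hi⟩
    exact ⟨⟨(i : ℕ), hi⟩, by simpa [Fin.ext_iff] using hiS, by simp [Fin.ext_iff]⟩
  · rintro ⟨a, ha, rfl⟩
    exact ⟨ha, a.isLt⟩

private lemma sum_decomp (S : Finset (Fin (n + k + 2))) :
    ∑ i ∈ S, gfun n k f t i =
      (∑ a ∈ Aof n k S, f a) + (S ∩ Tmid n k).card * t
        + (if Lidx n k ∈ S then (k + 1) * t else 0) := by
  classical
  rw [← Finset.sum_filter_add_sum_filter_not S (fun i => (i : ℕ) < n)]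
  rw [← Finset.sum_filter_add_sum_filter_not (S.filter (fun i : Fin (n+k+2) => ¬ (i : ℕ) < n))
    (fun i => (i : ℕ) < n + k + 1)]
  rw [Finset.filter_filter, Finset.filter_filter]
  have h1 : ∑ i ∈ S.filter (fun i : Fin (n+k+2) => (i : ℕ) < n), gfun n k f t i
      = ∑ a ∈ Aof n k S, f a := by
    rw [filter_lt_eq, Finset.sum_map]
    refine Finset.sum_congr rfl (fun a _ => ?_)
    simp [gfun, Fin.castLEEmb_apply, Fin.castLE, a.isLt]
  have h2 : S.filter (fun i : Fin (n+k+2) => ¬ (i : ℕ) < n ∧ (i : ℕ) < n + k + 1)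
      = S ∩ Tmid n k := by
    ext i
    simp only [Finset.mem_filter, Finset.mem_inter, Tmid, Finset.mem_univ, true_and]
    constructor <;> rintro ⟨hh1, hh2⟩ <;> exact ⟨hh1, by omega⟩
  have h3 : ∑ i ∈ S ∩ Tmid n k, gfun n k f t i = (S ∩ Tmid n k).card * t := by
    rw [Finset.sum_congr rfl (fun i hi => ?_), Finset.sum_const, smul_eq_mul]
    simp only [Finset.mem_inter, Tmid, Finset.mem_filter, Finset.mem_univ, true_and] at hi
    simp only [gfun]
    rw [dif_neg (by omega), if_pos (by omega)]
  have h4 : S.filter (fun i : Fin (n+k+2) => ¬ (i : ℕ) < n ∧ ¬ (i : ℕ) < n + k + 1)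
      = if Lidx n k ∈ S then {Lidx n k} else ∅ := by
    ext i
    have hi2 := i.isLt
    constructor
    · intro h
      simp only [Finset.mem_filter] at h
      have hiL : i = Lidx n k := by
        apply Fin.ext; simp only [Lidx]; omega
      subst hiL
      simp [h.1]
    · intro h
      by_cases hL : Lidx n k ∈ S
      · simp only [hL, if_true, Finset.mem_singleton] at h
        subst h
        simp only [Finset.mem_filter, Lidx]
        exact ⟨hL, by omega, by omega⟩
      · simp [hL] at h
  rw [h1, h2, h3, h4]
  by_cases hL : Lidx n k ∈ S
  · rw [if_pos hL, if_pos hL, Finset.sum_singleton]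
    simp only [gfun, Lidx]
    simp only [show ¬ (n + k + 1 < n) by omega, ↓reduceDIte, lt_self_iff_false, ↓reduceIte]
    ring
  · rw [if_neg hL, if_neg hL, Finset.sum_empty]
    omega

private lemma card_decomp (S : Finset (Fin (n + k + 2))) :
    S.card = (Aof n k S).card + (S ∩ Tmid n k).card
        + (if Lidx n k ∈ S then 1 else 0) := by
  classical
  rw [← Finset.card_filter_add_card_filter_not (s := S) (p := fun i => (i : ℕ) < n)]
  rw [← Finset.card_filter_add_card_filter_not
    (s := S.filter (fun i : Fin (n+k+2) => ¬ (i : ℕ) < n)) (p := fun i => (i : ℕ) < n + k + 1)]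
  rw [Finset.filter_filter, Finset.filter_filter]
  have h1 : (S.filter (fun i : Fin (n+k+2) => (i : ℕ) < n)).card = (Aof n k S).card := by
    rw [filter_lt_eq]; exact Finset.card_map _
  have h2 : S.filter (fun i : Fin (n+k+2) => ¬ (i : ℕ) < n ∧ (i : ℕ) < n + k + 1)
      = S ∩ Tmid n k := by
    ext i
    simp only [Finset.mem_filter, Finset.mem_inter, Tmid, Finset.mem_univ, true_and]
    constructor <;> rintro ⟨hh1, hh2⟩ <;> exact ⟨hh1, by omega⟩
  have h4 : S.filter (fun i : Fin (n+k+2) => ¬ (i : ℕ) < n ∧ ¬ (i : ℕ) < n + k + 1)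
      = if Lidx n k ∈ S then {Lidx n k} else ∅ := by
    ext i
    have hi2 := i.isLt
    constructor
    · intro h
      simp only [Finset.mem_filter] at h
      have hiL : i = Lidx n k := by
        apply Fin.ext; simp only [Lidx]; omega
      subst hiL
      simp [h.1]
    · intro h
      by_cases hL : Lidx n k ∈ S
      · simp only [hL, if_true, Finset.mem_singleton] at h
        subst h
        simp only [Finset.mem_filter, Lidx]
        exact ⟨hL, by omega, by omega⟩
      · simp [hL] at h
  rw [h1, h2, h4]
  by_cases hL : Lidx n k ∈ S
  · rw [if_pos hL, if_pos hL, Finset.card_singleton]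
    omega
  · rw [if_neg hL, if_neg hL, Finset.card_empty]
    omega


private lemma total_sum (n k : ℕ) (f : Fin n → ℕ) (t : ℕ) (ht : t = ∑ i, f i) :
    ∑ i, gfun n k f t i = (2 * k + 3) * t := by
  have h := sum_decomp n k f t Finset.univ
  have hA : Aof n k (Finset.univ : Finset (Fin (n + k + 2))) = Finset.univ := by
    ext a; simp [Aof]
  have hT : (Finset.univ ∩ Tmid n k) = Tmid n k := by
    simp
  rw [hA, hT, card_Tmid, if_pos (Finset.mem_univ _), ← ht] at h
  rw [h]; ring

/-- analysis direction 1 -/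
private lemma analyze (n k : ℕ) (hn : 1 ≤ n) (f : Fin n → ℕ) (hf : ∀ i, 1 ≤ f i)
    (t : ℕ) (ht : t = ∑ i, f i) (S : Finset (Fin (n + k + 2)))
    (hcard : 2 * S.card = n + k + 2)
    (hsum : ∑ i ∈ S, gfun n k f t i = ∑ i ∈ Sᶜ, gfun n k f t i)
    (hL : Lidx n k ∉ S) :
    ((∑ i ∈ Aof n k S, f i = ∑ i ∈ (Aof n k S)ᶜ, f i) ∧ 2 * (Aof n k S).card + k = n)
      ∧ (Aof n k S).map (Fin.castLEEmb (show n ≤ n + k + 2 by omega)) ∪ Tmid n k = S := by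
  have ht1 : 1 ≤ t := by
    rw [ht]
    calc 1 ≤ f ⟨0, hn⟩ := hf _
    _ ≤ ∑ i, f i := Finset.single_le_sum (fun i _ => Nat.zero_le _) (Finset.mem_univ _)
  set a := ∑ i ∈ Aof n k S, f i with ha_def
  set j := (S ∩ Tmid n k).card with hj_def
  have hdec := sum_decomp n k f t S
  rw [if_neg hL] at hdec
  rw [← ha_def, ← hj_def] at hdec
  have htot : ∑ i ∈ S, gfun n k f t i + ∑ i ∈ Sᶜ, gfun n k f t i = (2 * k + 3) * t := by
    rw [Finset.sum_add_sum_compl]; exact total_sum n k f t ht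
  have heq2 : 2 * (a + j * t) = (2 * k + 3) * t := by linarith
  have hj : j ≤ k + 1 := by
    rw [hj_def, ← card_Tmid n k]
    exact Finset.card_le_card Finset.inter_subset_right
  have ha : a ≤ t := by
    rw [ht, ha_def]
    exact Finset.sum_le_sum_of_subset (Finset.subset_univ _)
  obtain ⟨u, hu⟩ : ∃ u, j + u = k + 1 := ⟨k + 1 - j, by omega⟩
  have hsplit : (2 * k + 3) * t = 2 * (j * t) + (2 * u + 1) * t := by
    rw [show 2 * k + 3 = 2 * j + (2 * u + 1) from by omega]; ring
  have key : 2 * a = (2 * u + 1) * t := by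
    rw [hsplit] at heq2; linarith
  have hu0 : u = 0 := by
    by_contra h
    have h3 : 3 * t ≤ (2 * u + 1) * t := Nat.mul_le_mul_right t (by omega)
    linarith
  subst hu0
  have h2a : 2 * a = t := by linarith
  have hjk : j = k + 1 := by omega
  have hTS : S ∩ Tmid n k = Tmid n k :=
    Finset.eq_of_subset_of_card_le Finset.inter_subset_right
      (by rw [card_Tmid]; omega)
  have hcd := card_decomp n k S
  rw [if_neg hL] at hcd
  have hAcard : 2 * (Aof n k S).card + k = n := by omega
  have hAsum : a + ∑ i ∈ (Aof n k S)ᶜ, f i = t := by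
    rw [ht, ha_def]; exact Finset.sum_add_sum_compl _ _
  refine ⟨⟨by omega, hAcard⟩, ?_⟩
  rw [← filter_lt_eq, ← hTS]
  ext i
  simp only [Finset.mem_union, Finset.mem_filter, Finset.mem_inter]
  constructor
  · rintro (⟨h, _⟩ | ⟨h, _⟩) <;> exact h
  · intro hiS
    by_cases h1 : (i : ℕ) < n
    · exact Or.inl ⟨hiS, h1⟩
    · refine Or.inr ⟨hiS, ?_⟩
      simp only [Tmid, Finset.mem_filter, Finset.mem_univ, true_and]
      have hi2 := i.isLt
      refine ⟨by omega, ?_⟩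
      by_contra h2
      have hiL : i = Lidx n k := Fin.ext (by simp only [Lidx]; omega)
      exact hL (hiL ▸ hiS)

/-- analysis direction 2 -/
private lemma build (n k : ℕ) (f : Fin n → ℕ)
    (t : ℕ) (ht : t = ∑ i, f i) (A : Finset (Fin n))
    (hAsum : ∑ i ∈ A, f i = ∑ i ∈ Aᶜ, f i) (hAcard : 2 * A.card + k = n) :
    (2 * ((A.map (Fin.castLEEmb (show n ≤ n + k + 2 by omega)) ∪ Tmid n k)).card = n + k + 2 ∧
      ∑ i ∈ A.map (Fin.castLEEmb (show n ≤ n + k + 2 by omega)) ∪ Tmid n k, gfun n k f t i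
        = ∑ i ∈ (A.map (Fin.castLEEmb (show n ≤ n + k + 2 by omega)) ∪ Tmid n k)ᶜ,
            gfun n k f t i)
      ∧ Lidx n k ∉ A.map (Fin.castLEEmb (show n ≤ n + k + 2 by omega)) ∪ Tmid n k
      ∧ Aof n k (A.map (Fin.castLEEmb (show n ≤ n + k + 2 by omega)) ∪ Tmid n k) = A := by
  set S := A.map (Fin.castLEEmb (show n ≤ n + k + 2 by omega)) ∪ Tmid n k with hS_def
  have hL : Lidx n k ∉ S := by
    simp only [hS_def, Finset.mem_union, Finset.mem_map, Fin.castLEEmb_apply, Tmid,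
      Finset.mem_filter, Finset.mem_univ, true_and, Lidx, not_or]
    constructor
    · rintro ⟨b, _, hb⟩
      have := b.isLt
      rw [Fin.ext_iff] at hb
      simp only [Fin.coe_castLE] at hb
      omega
    · omega
  have hAof : Aof n k S = A := by
    ext b
    simp only [Aof, Finset.mem_filter, Finset.mem_univ, true_and, hS_def, Finset.mem_union,
      Finset.mem_map, Fin.castLEEmb_apply, Tmid, Fin.coe_castLE]
    constructor
    · rintro (⟨c, hc, hcb⟩ | h)
      · rwa [(Fin.castLE_injective _ hcb : c = b)] at hc
      · have := b.isLt
        omega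
    · intro hb
      exact Or.inl ⟨b, hb, rfl⟩
  have hTS : S ∩ Tmid n k = Tmid n k :=
    Finset.inter_eq_right.mpr Finset.subset_union_right
  have hcd := card_decomp n k S
  rw [if_neg hL, hAof, hTS, card_Tmid] at hcd
  have hcard : 2 * S.card = n + k + 2 := by omega
  have h2a : 2 * (∑ i ∈ A, f i) = t := by
    have := Finset.sum_add_sum_compl A f
    rw [← ht] at this
    omega
  have hdec := sum_decomp n k f t S
  rw [if_neg hL, hAof, hTS, card_Tmid] at hdec
  have htot : ∑ i ∈ S, gfun n k f t i + ∑ i ∈ Sᶜ, gfun n k f t i = (2 * k + 3) * t := by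
    rw [Finset.sum_add_sum_compl]; exact total_sum n k f t ht
  have hsplit : (2 * k + 3) * t = 2 * ((k + 1) * t) + t := by ring
  refine ⟨⟨hcard, by linarith⟩, hL, hAof⟩


private lemma keyk (n : ℕ) (hn : 1 ≤ n) (f : Fin n → ℕ) (hf : ∀ i, 1 ≤ f i)
    (t : ℕ) (ht : t = ∑ i, f i) (k : ℕ) :
    (Finset.univ.filter
        (fun S : Finset (Fin (n + k + 2)) =>
          2 * S.card = n + k + 2 ∧
            ∑ i ∈ S, gfun n k f t i = ∑ i ∈ Sᶜ, gfun n k f t i)).card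
    = 2 * (Finset.univ.filter
        (fun A : Finset (Fin n) =>
          (∑ i ∈ A, f i = ∑ i ∈ Aᶜ, f i) ∧ 2 * A.card + k = n)).card := by
  classical
  set P := Finset.univ.filter
      (fun S : Finset (Fin (n + k + 2)) =>
        2 * S.card = n + k + 2 ∧
          ∑ i ∈ S, gfun n k f t i = ∑ i ∈ Sᶜ, gfun n k f t i) with hP
  set Q := Finset.univ.filter
      (fun A : Finset (Fin n) =>
        (∑ i ∈ A, f i = ∑ i ∈ Aᶜ, f i) ∧ 2 * A.card + k = n) with hQ
  have hsplit := Finset.card_filter_add_card_filter_not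
    (s := P) (p := fun S => Lidx n k ∈ S)
  have hbij1 : (P.filter (fun S => Lidx n k ∈ S)).card
      = (P.filter (fun S => ¬ Lidx n k ∈ S)).card := by
    apply Finset.card_nbij' (i := fun S => Sᶜ) (j := fun S => Sᶜ)
    · intro S hS
      simp only [hP, Finset.mem_coe, Finset.mem_filter, Finset.mem_univ, true_and] at hS ⊢
      obtain ⟨⟨hc, hs⟩, hLmem⟩ := hS
      refine ⟨⟨?_, ?_⟩, ?_⟩
      · rw [Finset.card_compl]
        simp only [Fintype.card_fin]
        omega
      · rw [compl_compl]; exact hs.symm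
      · simp [hLmem]
    · intro S hS
      simp only [hP, Finset.mem_coe, Finset.mem_filter, Finset.mem_univ, true_and] at hS ⊢
      obtain ⟨⟨hc, hs⟩, hLmem⟩ := hS
      refine ⟨⟨?_, ?_⟩, ?_⟩
      · rw [Finset.card_compl]
        simp only [Fintype.card_fin]
        omega
      · rw [compl_compl]; exact hs.symm
      · simpa using hLmem
    · intro S _; exact compl_compl S
    · intro S _; exact compl_compl S
  have hbij2 : (P.filter (fun S => ¬ Lidx n k ∈ S)).card = Q.card := by
    apply Finset.card_nbij' (i := fun S => Aof n k S)
      (j := fun A => A.map (Fin.castLEEmb (show n ≤ n + k + 2 by omega)) ∪ Tmid n k)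
    · intro S hS
      simp only [hP, hQ, Finset.mem_coe, Finset.mem_filter, Finset.mem_univ, true_and] at hS ⊢
      exact (analyze n k hn f hf t ht S hS.1.1 hS.1.2 hS.2).1
    · intro A hA
      simp only [hQ, hP, Finset.mem_coe, Finset.mem_filter, Finset.mem_univ, true_and] at hA ⊢
      have h := build n k f t ht A hA.1 hA.2
      exact ⟨h.1, h.2.1⟩
    · intro S hS
      simp only [hP, Finset.mem_coe, Finset.mem_filter, Finset.mem_univ, true_and] at hS
      exact (analyze n k hn f hf t ht S hS.1.1 hS.1.2 hS.2).2
    · intro A hA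
      simp only [hQ, Finset.mem_coe, Finset.mem_filter, Finset.mem_univ, true_and] at hA
      exact (build n k f t ht A hA.1 hA.2).2.2
  omega

end key

/-- Let `n ≥ 1`, `f : Fin n → ℕ` with `f i ≥ 1`, and `t = ∑ f i`.  For each `k` let
`E k` be the number of subsets `S ⊆ Fin (n+k+2)` with `2|S| = n+k+2` which are equal-sum for
the function equal to `f` on the first `n` indices, to `t` on the next `k+1` indices, and to
`(k+1)·t` on the last index.  Then
`2 · #{S ⊆ Fin n : S equal-sum for f} = E 0 + 2 · ∑_{k=1}^{n−2} E k`. -/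
theorem stmt9 (n : ℕ) (hn : 1 ≤ n) (f : Fin n → ℕ) (hf : ∀ i, 1 ≤ f i)
    (t : ℕ) (ht : t = ∑ i, f i)
    (E : ℕ → ℕ)
    (hE : ∀ k : ℕ, E k =
      (Finset.univ.filter
        (fun S : Finset (Fin (n + k + 2)) =>
          2 * S.card = n + k + 2 ∧
            ∑ i ∈ S, (if h : (i : ℕ) < n then f ⟨i, h⟩
                else if (i : ℕ) < n + k + 1 then t else (k + 1) * t)
              = ∑ i ∈ Sᶜ, (if h : (i : ℕ) < n then f ⟨i, h⟩
                else if (i : ℕ) < n + k + 1 then t else (k + 1) * t))).card) :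
    2 * (Finset.univ.filter
        (fun S : Finset (Fin n) => ∑ i ∈ S, f i = ∑ i ∈ Sᶜ, f i)).card
      = E 0 + 2 * ∑ k ∈ Finset.Icc 1 (n - 2), E k := by
  classical
  set Pn := Finset.univ.filter
      (fun S : Finset (Fin n) => ∑ i ∈ S, f i = ∑ i ∈ Sᶜ, f i) with hPn
  have ht1 : 1 ≤ t := by
    rw [ht]
    calc 1 ≤ f ⟨0, hn⟩ := hf _
    _ ≤ ∑ i, f i := Finset.single_le_sum (fun i _ => Nat.zero_le _) (Finset.mem_univ _)
  -- E k in terms of the Fin n side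
  have hEk : ∀ k : ℕ, E k = 2 * (Pn.filter (fun A => 2 * A.card + k = n)).card := by
    intro k
    rw [hE k, hPn, Finset.filter_filter]
    exact keyk n hn f hf t ht k
  -- basic facts about members of Pn
  have hcard_le : ∀ A : Finset (Fin n), A.card ≤ n := by
    intro A
    simpa using Finset.card_le_univ A
  have hA1 : ∀ A ∈ Pn, 1 ≤ A.card := by
    intro A hA
    simp only [hPn, Finset.mem_filter, Finset.mem_univ, true_and] at hA
    by_contra h
    have h0 : A = ∅ := Finset.card_eq_zero.mp (by omega)
    subst h0
    rw [Finset.sum_empty, Finset.compl_empty, ← ht] at hA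
    omega
  -- split Pn by 2*card vs n
  have hsplit1 := Finset.card_filter_add_card_filter_not
    (s := Pn) (p := fun A => 2 * A.card + 0 = n)
  have hsplit2 := Finset.card_filter_add_card_filter_not
    (s := Pn.filter (fun A => ¬ 2 * A.card + 0 = n)) (p := fun A => 2 * A.card < n)
  have he1 : (Pn.filter (fun A => ¬ 2 * A.card + 0 = n)).filter (fun A => 2 * A.card < n)
      = Pn.filter (fun A => 2 * A.card < n) := by
    ext A
    simp only [Finset.mem_filter]
    constructor
    · rintro ⟨⟨h1, _⟩, h3⟩; exact ⟨h1, h3⟩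
    · rintro ⟨h1, h2⟩; exact ⟨⟨h1, by omega⟩, h2⟩
  have he2 : (Pn.filter (fun A => ¬ 2 * A.card + 0 = n)).filter (fun A => ¬ 2 * A.card < n)
      = Pn.filter (fun A => n < 2 * A.card) := by
    ext A
    simp only [Finset.mem_filter]
    constructor
    · rintro ⟨⟨h1, h2⟩, h3⟩; exact ⟨h1, by omega⟩
    · rintro ⟨h1, h2⟩; exact ⟨⟨h1, by omega⟩, by omega⟩
  rw [he1, he2] at hsplit2
  -- complement bijection between < and >
  have hcompl : ∀ A : Finset (Fin n), A ∈ Pn → Aᶜ ∈ Pn := by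
    intro A hA
    simp only [hPn, Finset.mem_filter, Finset.mem_univ, true_and] at hA ⊢
    rw [compl_compl]; exact hA.symm
  have hlg : (Pn.filter (fun A => 2 * A.card < n)).card
      = (Pn.filter (fun A => n < 2 * A.card)).card := by
    apply Finset.card_nbij' (i := fun A => Aᶜ) (j := fun A => Aᶜ)
    · intro A hA
      simp only [Finset.mem_coe, Finset.mem_filter] at hA ⊢
      refine ⟨hcompl A hA.1, ?_⟩
      rw [Finset.card_compl]
      simp only [Fintype.card_fin]
      have := hcard_le A
      omega
    · intro A hA
      simp only [Finset.mem_coe, Finset.mem_filter] at hA ⊢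
      refine ⟨hcompl A hA.1, ?_⟩
      rw [Finset.card_compl]
      simp only [Fintype.card_fin]
      have := hcard_le A
      omega
    · intro A _; exact compl_compl A
    · intro A _; exact compl_compl A
  -- fiberwise count of the < part
  have hfib : (Pn.filter (fun A => 2 * A.card < n)).card
      = ∑ k ∈ Finset.Icc 1 (n - 2),
          ((Pn.filter (fun A => 2 * A.card < n)).filter
            (fun A => n - 2 * A.card = k)).card := by
    apply Finset.card_eq_sum_card_fiberwise
    intro A hA
    simp only [Finset.mem_coe, Finset.mem_filter] at hA
    have h1 := hA1 A hA.1
    simp only [Finset.mem_coe, Finset.mem_Icc]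
    omega
  have hfib2 : ∀ k ∈ Finset.Icc 1 (n - 2),
      ((Pn.filter (fun A => 2 * A.card < n)).filter (fun A => n - 2 * A.card = k)).card
        = (Pn.filter (fun A => 2 * A.card + k = n)).card := by
    intro k hk
    simp only [Finset.mem_Icc] at hk
    congr 1
    ext A
    simp only [Finset.mem_filter]
    constructor
    · rintro ⟨⟨h1, h2⟩, h3⟩; exact ⟨h1, by omega⟩
    · rintro ⟨h1, h2⟩; exact ⟨⟨h1, by omega⟩, by omega⟩
  rw [Finset.sum_congr rfl hfib2] at hfib
  -- assemble
  have hEsum : ∑ k ∈ Finset.Icc 1 (n - 2), E k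
      = 2 * ∑ k ∈ Finset.Icc 1 (n - 2), (Pn.filter (fun A => 2 * A.card + k = n)).card := by
    rw [Finset.mul_sum]
    exact Finset.sum_congr rfl (fun k _ => hEk k)
  rw [hEk 0, hEsum]
  omega
end
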